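/- arXiv:2402.01953 — 5 statements merged into one kernel-verified Lean document; each statement's English description precedes it below -/
import Mathlib

section
/- The product set [0,1] × G^(1) is contained in F^(2), where G^(1) ⊆ [0,1] is the boundary Cantor-type set of the one-dimensional construction. -/
open Set MeasureTheory Filter
open scoped Classical

noncomputable section

/-- Points of `ℝ^d` with the Euclidean metric. -/
abbrev Pt (d : ℕ) := EuclideanSpace ℝ (Fin d)

/-- The closed cube `∏ [(lᵢ-1)/5ⁿ, lᵢ/5ⁿ]`. -/
def cube (d n : ℕ) (l : Fin d → ℕ) : Set (Pt d) :=
  {x | ∀ i, ((l i : ℝ) - 1) / 5 ^ n ≤ x i ∧ x i ≤ (l i : ℝ) / 5 ^ n}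

/-- The collection `𝒬ₙ⁽ᵈ⁾` of level-`n` cubes. -/
def Qcol (d n : ℕ) : Set (Set (Pt d)) :=
  {Q | ∃ l : Fin d → ℕ, (∀ i, 1 ≤ l i ∧ l i ≤ 5 ^ n) ∧ Q = cube d n l}

/-- `𝒬ₙ⁽ᵈ⁾(A)`: the level-`n` cubes whose interior meets `A`. -/
def QcolOf (d n : ℕ) (A : Set (Pt d)) : Set (Set (Pt d)) :=
  {Q | Q ∈ Qcol d n ∧ (interior Q ∩ A).Nonempty}

/-- `F₀⁽ᵈ⁾ = [0,1]^d`. -/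
def F0 (d : ℕ) : Set (Pt d) := {x | ∀ i, x i ∈ Icc (0 : ℝ) 1}

/-- `F₁⁽ᵈ⁾`. -/
def F1 (d : ℕ) : Set (Pt d) :=
  F0 d \ ⋃ i : Fin d, {x | (∀ j, j < i → x j ∈ Ioo (2/5 : ℝ) (3/5)) ∧
    x i ∈ Ioo (1/5 : ℝ) (2/5) ∪ Ioo (3/5 : ℝ) (4/5) ∧
    ∀ j, i < j → x j ∈ Ioo (2/5 : ℝ) (3/5)}

/-- The orientation-preserving affine map from `[0,1]^d` onto the cube indexed by `l` at
level `n`. -/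
def psi (d n : ℕ) (l : Fin d → ℕ) (x : Pt d) : Pt d :=
  WithLp.toLp 2 (fun i => ((l i : ℝ) - 1) / 5 ^ n + x i / 5 ^ n)

/-- The approximations `Fₙ⁽ᵈ⁾`. -/
def Fn (d : ℕ) : ℕ → Set (Pt d)
  | 0 => F0 d
  | 1 => F1 d
  | n + 2 => ⋃ l ∈ {l : Fin d → ℕ | cube d 1 l ∈ QcolOf d 1 (F1 d)}, psi d 1 l '' Fn d (n + 1)

/-- The fractal `F⁽ᵈ⁾`. -/
def Fset (d : ℕ) : Set (Pt d) := ⋂ n, Fn d n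

/-- `G₁⁽ᵈ⁾`: union of the level-1 cubes of `F₁⁽ᵈ⁾` which meet the boundary of `[0,1]^d`. -/
def G1 (d : ℕ) : Set (Pt d) :=
  ⋃ Q ∈ {Q | Q ∈ QcolOf d 1 (F1 d) ∧ (Q ∩ frontier (F0 d)).Nonempty}, Q

/-- The approximations `Gₙ⁽ᵈ⁾`. -/
def Gn (d : ℕ) : ℕ → Set (Pt d)
  | 0 => F0 d
  | 1 => G1 d
  | n + 2 => ⋃ l ∈ {l : Fin d → ℕ | cube d 1 l ∈ QcolOf d 1 (G1 d)}, psi d 1 l '' Gn d (n + 1)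

/-- The boundary fractal `G⁽ᵈ⁾ = [0,1]^d ∩ ⋂_{n ≥ 1} Gₙ⁽ᵈ⁾`. -/
def Gset (d : ℕ) : Set (Pt d) := F0 d ∩ ⋂ n, ⋂ (_ : 1 ≤ n), Gn d n

/-- The discrete `p`-energy `𝓔ₚⁿ(f)` on the level-`n` cubes of `F⁽ᵈ⁾`. -/
def energy (d n : ℕ) (p : ℝ) (f : Set (Pt d) → ℝ) : ℝ :=
  (1 / 2) * ∑' Q : QcolOf d n (Fset d), ∑' Q' : QcolOf d n (Fset d),
    if ((Q : Set (Pt d)) ∩ (Q' : Set (Pt d))).Nonempty then |f Q - f Q'| ^ p else 0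

/-- `Sᵐ(A)`: level-`(n+m)` cubes of `F⁽ᵈ⁾` contained in some cube of `A`. -/
def Sm (d n m : ℕ) (A : Set (Set (Pt d))) : Set (Set (Pt d)) :=
  {Q | Q ∈ QcolOf d (n + m) (Fset d) ∧ ∃ Q' ∈ A, Q ⊆ Q'}

/-- The effective `p`-conductance `𝓔_{p,m}(A₁, A₂)`. -/
def conduct (d n m : ℕ) (p : ℝ) (A₁ A₂ : Set (Set (Pt d))) : ℝ :=
  sInf {e : ℝ | ∃ f : Set (Pt d) → ℝ,
    (∀ Q ∈ Sm d n m A₁, f Q = 1) ∧ (∀ Q ∈ Sm d n m A₂, f Q = 0) ∧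
    e = energy d (n + m) p f}

/-- `Γ(Q)`: level-`n` cubes of `F⁽ᵈ⁾` meeting `Q`. -/
def Gam (d n : ℕ) (Q : Set (Pt d)) : Set (Set (Pt d)) :=
  {Q' | Q' ∈ QcolOf d n (Fset d) ∧ (Q' ∩ Q).Nonempty}

/-- `Γ(Q)ᶜ = 𝒬ₙ⁽ᵈ⁾(F⁽ᵈ⁾) \ Γ(Q)`. -/
def GamC (d n : ℕ) (Q : Set (Pt d)) : Set (Set (Pt d)) :=
  QcolOf d n (Fset d) \ Gam d n Q

/-- The corner cube `[0, 1/5]^d`. -/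
def Qone (d : ℕ) : Set (Pt d) := {x | ∀ i, x i ∈ Icc (0 : ℝ) (1/5)}

/-- The center cube `[2/5, 3/5]^d`. -/
def Qtwo (d : ℕ) : Set (Pt d) := {x | ∀ i, x i ∈ Icc (2/5 : ℝ) (3/5)}

end

noncomputable section

/-- strict inequalities inside interior of a cube -/
lemma interior_cube_lt {d n : ℕ} {l : Fin d → ℕ} {z : Pt d}
    (hz : z ∈ interior (cube d n l)) (i : Fin d) :
    ((l i : ℝ) - 1) / 5 ^ n < z i ∧ z i < (l i : ℝ) / 5 ^ n := by
  rw [mem_interior_iff_mem_nhds, Metric.mem_nhds_iff] at hz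
  obtain ⟨ε, hε, hball⟩ := hz
  have key : ∀ a : ℝ, |a| < ε → (z + a • EuclideanSpace.single i (1:ℝ)) ∈ cube d n l := by
    intro a ha
    apply hball
    have : dist (z + a • EuclideanSpace.single i (1:ℝ)) z = |a| := by
      rw [dist_eq_norm, add_sub_cancel_left, norm_smul, EuclideanSpace.norm_single]
      simp [abs_of_nonneg]
    simpa [Metric.mem_ball, this] using ha
  have h1 := (key (ε/2) (by rw [abs_of_pos (by linarith)]; linarith)) i
  have h2 := (key (-(ε/2)) (by rw [abs_of_neg (by linarith)]; linarith)) i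
  have e1 : (z + (ε/2) • EuclideanSpace.single i (1:ℝ)) i = z i + ε/2 := by
    have : ((ε/2) • EuclideanSpace.single i (1:ℝ)) i = ε/2 := by
      simp [EuclideanSpace.single_apply]
    show z i + ((ε/2) • EuclideanSpace.single i (1:ℝ)) i = z i + ε/2
    rw [this]
  have e2 : (z + (-(ε/2)) • EuclideanSpace.single i (1:ℝ)) i = z i - ε/2 := by
    have : ((-(ε/2)) • EuclideanSpace.single i (1:ℝ)) i = -(ε/2) := by
      simp [EuclideanSpace.single_apply]
    show z i + ((-(ε/2)) • EuclideanSpace.single i (1:ℝ)) i = z i - ε/2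
    rw [this]; ring
  rw [e1] at h1; rw [e2] at h2
  constructor <;> linarith [h1.2, h2.1]

/-- the open box is inside the interior of the cube -/
lemma box_subset_interior_cube {d n : ℕ} {l : Fin d → ℕ} :
    {x : Pt d | ∀ i, ((l i : ℝ) - 1) / 5 ^ n < x i ∧ x i < (l i : ℝ) / 5 ^ n}
      ⊆ interior (cube d n l) := by
  apply interior_maximal
  · intro x hx i; exact ⟨(hx i).1.le, (hx i).2.le⟩
  · have : {x : Pt d | ∀ i, ((l i : ℝ) - 1) / 5 ^ n < x i ∧ x i < (l i : ℝ) / 5 ^ n}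
        = ⋂ i, (fun x : Pt d => x i) ⁻¹' Ioo (((l i : ℝ) - 1) / 5 ^ n) ((l i : ℝ) / 5 ^ n) := by
      ext x; simp [mem_iInter, Set.mem_preimage, Set.mem_Ioo]
    rw [this]
    exact isOpen_iInter_of_finite fun i => (isOpen_Ioo).preimage (PiLp.continuous_apply 2 _ i)

lemma pt1_eq {y : Pt 1} {s : ℝ} (h : y 0 = s) : y = WithLp.toLp 2 (fun _ : Fin 1 => s) := by
  ext i
  have : i = 0 := Subsingleton.elim _ _
  rw [this, h]

lemma G1_hull : G1 1 ⊆ {z : Pt 1 | z 0 ∈ Icc (0:ℝ) (1/5) ∨ z 0 ∈ Icc (4/5:ℝ) 1} := by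
  intro z hz
  simp only [G1, mem_iUnion, exists_prop] at hz
  obtain ⟨Q, ⟨⟨⟨l, hl, rfl⟩, -⟩, ⟨w, hwQ, hwf⟩⟩, hzQ⟩ := hz
  have hfr : w 0 = 0 ∨ w 0 = 1 := by
    have hcl : IsClosed (F0 1) := by
      have : F0 1 = (fun x : Pt 1 => x 0) ⁻¹' Icc 0 1 := by
        ext x
        constructor
        · intro h; exact h 0
        · intro h i; have : i = 0 := Subsingleton.elim _ _; rw [this]; exact h
      rw [this]; exact isClosed_Icc.preimage (PiLp.continuous_apply 2 _ 0)
    have hint : (fun x : Pt 1 => x 0) ⁻¹' Ioo 0 1 ⊆ interior (F0 1) := by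
      apply interior_maximal
      · intro x hx i
        have : i = 0 := Subsingleton.elim _ _
        rw [this]; exact ⟨hx.1.le, hx.2.le⟩
      · exact isOpen_Ioo.preimage (PiLp.continuous_apply 2 _ 0)
    rw [frontier, hcl.closure_eq] at hwf
    have h1 : w 0 ∈ Icc (0:ℝ) 1 := hwf.1 0
    have h2 : w 0 ∉ Ioo (0:ℝ) 1 := fun hc => hwf.2 (hint hc)
    rcases lt_or_eq_of_le h1.1 with h | h
    · rcases lt_or_eq_of_le h1.2 with h' | h'
      · exact absurd ⟨h, h'⟩ h2
      · right; exact h'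
    · left; exact h.symm
  have hw0 := hwQ 0
  have hz0 := hzQ 0
  have hl0 := hl 0
  norm_num at hw0 hz0
  rcases hfr with h | h
  · rw [h] at hw0
    have : l 0 = 1 := by
      have : (l 0 : ℝ) ≤ 1 := by linarith [hw0.1]
      have : l 0 ≤ 1 := by exact_mod_cast this
      omega
    rw [this] at hz0; left
    constructor <;> [skip; skip] <;> push_cast at hz0 <;> [linarith [hz0.1]; linarith [hz0.2]]
  · rw [h] at hw0
    have : l 0 = 5 := by
      have : (5 : ℝ) ≤ l 0 := by linarith [hw0.2]
      have : 5 ≤ l 0 := by exact_mod_cast this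
      omega
    rw [this] at hz0; right
    constructor <;> [skip; skip] <;> push_cast at hz0 <;> [linarith [hz0.1]; linarith [hz0.2]]

lemma G_index {l : Fin 1 → ℕ} (h : cube 1 1 l ∈ QcolOf 1 1 (G1 1)) : l 0 = 1 ∨ l 0 = 5 := by
  obtain ⟨⟨l'', hl'', heq⟩, z, hzi, hzG⟩ := h
  have hle : l 0 ≤ 5 := by
    have hp : WithLp.toLp 2 (fun _ : Fin 1 => (l 0 : ℝ)/5^1) ∈ cube 1 1 l := by
      intro i
      have hi : i = 0 := Subsingleton.elim _ _
      rw [hi]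
      refine ⟨?_, le_rfl⟩
      show ((l 0:ℝ)-1)/5^1 ≤ (l 0:ℝ)/5^1
      norm_num
      linarith
    rw [heq] at hp
    have := (hp 0).2
    norm_num at this
    have h5r : (l 0:ℝ) ≤ l'' 0 := by linarith
    have h5 : l 0 ≤ l'' 0 := by exact_mod_cast h5r
    have := (hl'' 0).2
    omega
  have hs := interior_cube_lt hzi 0
  have hhull := G1_hull hzG
  norm_num at hs
  rcases hhull with h | h
  · left
    have h1 : ((l 0 : ℝ) - 1)/5 < 1/5 := lt_of_lt_of_le hs.1 h.2
    have h2 : (0:ℝ) < (l 0 : ℝ)/5 := lt_of_le_of_lt h.1 hs.2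
    have : (l 0 : ℝ) < 2 := by linarith
    have hu : l 0 < 2 := by exact_mod_cast this
    have : (0:ℝ) < (l 0 : ℝ) := by linarith
    have hv : 0 < l 0 := by exact_mod_cast this
    omega
  · right
    have h1 : (4/5:ℝ) < (l 0 : ℝ)/5 := lt_of_le_of_lt h.1 hs.2
    have : (4:ℝ) < (l 0 : ℝ) := by linarith
    have hv : 4 < l 0 := by exact_mod_cast this
    omega

lemma Gn_hull : ∀ m, Gn 1 (m+1) ⊆ {z : Pt 1 | z 0 ∈ Icc (0:ℝ) 1} := by
  intro m
  induction m with
  | zero =>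
    intro z hz
    rcases G1_hull hz with h | h
    · exact ⟨h.1, by linarith [h.2]⟩
    · exact ⟨by linarith [h.1], h.2⟩
  | succ k ih =>
    intro z hz
    simp only [Gn, mem_iUnion, exists_prop] at hz
    obtain ⟨l, hl, y, hy, rfl⟩ := hz
    have hy0 := (ih hy)
    have hl0 : l 0 = 1 ∨ l 0 = 5 := G_index hl
    have : psi 1 1 l y 0 = ((l 0 : ℝ) - 1)/5 + y 0/5 := by norm_num [psi]
    rw [mem_setOf_eq, this]
    rcases hl0 with h | h <;> rw [h] <;> push_cast <;>
      exact ⟨by linarith [hy0.1], by linarith [hy0.2]⟩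

/-- one-step decomposition of a point of `G` -/
lemma G_step {t : ℝ} (ht : ∀ m, 1 ≤ m → WithLp.toLp 2 (fun _ : Fin 1 => t) ∈ Gn 1 m) :
    ∃ l' : ℕ, (l' = 1 ∨ l' = 5) ∧ ((l' : ℝ) - 1)/5 ≤ t ∧ t ≤ (l' : ℝ)/5 ∧
      (∀ m, 1 ≤ m → WithLp.toLp 2 (fun _ : Fin 1 => 5*t - ((l' : ℝ) - 1)) ∈ Gn 1 m) := by
  have hhull : t ≤ 1/5 ∨ 4/5 ≤ t := by
    rcases G1_hull (ht 1 le_rfl) with h | h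
    · left; exact h.2
    · right; exact h.1
  set l' : ℕ := if t ≤ 1/5 then 1 else 5 with hl'def
  have hl'cases : l' = 1 ∨ l' = 5 := by
    by_cases h : t ≤ 1/5
    · left; rw [hl'def, if_pos h]
    · right; rw [hl'def, if_neg h]
  have key : ∀ k : ℕ, WithLp.toLp 2 (fun _ : Fin 1 => 5*t - ((l' : ℝ) - 1)) ∈ Gn 1 (k+1) ∧
      ((l' : ℝ) - 1)/5 ≤ t ∧ t ≤ (l' : ℝ)/5 := by
    intro k
    have h2 := ht (k+2) (by omega)
    simp only [Gn, mem_iUnion, exists_prop] at h2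
    obtain ⟨lm, hlm, y, hy, hpsi⟩ := h2
    have ht0 : t = ((lm 0 : ℝ) - 1)/5 + y 0/5 := by
      have := congrArg (fun v : Pt 1 => v 0) hpsi
      simp only [psi, PiLp.toLp_apply] at this
      rw [← this]; norm_num
    have hy0 : y 0 ∈ Icc (0:ℝ) 1 := Gn_hull k hy
    have hlm0 : lm 0 = 1 ∨ lm 0 = 5 := G_index hlm
    have hlml' : lm 0 = l' := by
      by_cases h : t ≤ 1/5
      · rcases hlm0 with h1 | h1
        · rw [h1, hl'def, if_pos h]
        · exfalso; rw [h1] at ht0; push_cast at ht0; linarith [hy0.1]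
      · rcases hlm0 with h1 | h1
        · exfalso; rw [h1] at ht0; push_cast at ht0; linarith [hy0.2]
        · rw [h1, hl'def, if_neg h]
    rw [hlml'] at ht0
    have hyeq : y = WithLp.toLp 2 (fun _ : Fin 1 => 5*t - ((l' : ℝ) - 1)) := by
      apply pt1_eq; rw [ht0]; ring
    refine ⟨by rw [← hyeq]; exact hy, by rw [ht0]; linarith [hy0.1], by rw [ht0]; linarith [hy0.2]⟩
  refine ⟨l', hl'cases, (key 0).2.1, (key 0).2.2, ?_⟩
  intro m hm
  obtain ⟨k, rfl⟩ : ∃ k, m = k + 1 := ⟨m - 1, by omega⟩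
  exact (key k).1

lemma main_aux : ∀ n, ∀ x : Pt 2, x 0 ∈ Icc (0:ℝ) 1 →
    (∀ m, 1 ≤ m → WithLp.toLp 2 (fun _ : Fin 1 => x 1) ∈ Gn 1 m) → x ∈ Fn 2 n := by
  intro n
  induction n using Nat.strong_induction_on with
  | _ n ih =>
  match n, ih with
  | 0, _ =>
    intro x hx0 ht
    have hhull := G1_hull (ht 1 le_rfl)
    simp only [mem_setOf_eq, mem_Icc] at hhull
    intro i
    fin_cases i
    · exact hx0
    · show x 1 ∈ Icc (0:ℝ) 1
      rcases hhull with h | h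
      · exact ⟨h.1, by linarith [h.2]⟩
      · exact ⟨by linarith [h.1], h.2⟩
  | 1, _ =>
    intro x hx0 ht
    have hhull := G1_hull (ht 1 le_rfl)
    simp only [mem_setOf_eq, mem_Icc] at hhull
    show x ∈ F1 2
    refine ⟨?_, ?_⟩
    · intro i
      fin_cases i
      · exact hx0
      · show x 1 ∈ Icc (0:ℝ) 1
        rcases hhull with h | h
        · exact ⟨h.1, by linarith [h.2]⟩
        · exact ⟨by linarith [h.1], h.2⟩
    · intro hmem
      simp only [mem_iUnion, mem_setOf_eq, mem_union, mem_Ioo] at hmem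
      obtain ⟨i, h1, h2, h3⟩ := hmem
      fin_cases i
      · have h4 : 2/5 < x 1 ∧ x 1 < 3/5 := h3 1 (by decide)
        rcases hhull with h | h <;> linarith [h4.1, h4.2]
      · have h2' : (1/5 < x 1 ∧ x 1 < 2/5) ∨ (3/5 < x 1 ∧ x 1 < 4/5) := h2
        rcases h2' with h2 | h2 <;> rcases hhull with h | h <;> linarith [h2.1, h2.2]
  | (n+2), ih =>
    intro x hx0 ht
    obtain ⟨l', hl'c, hlb1, hlb2, hs⟩ := G_step ht
    obtain ⟨a, ha1, ha5, hab1, hab2⟩ :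
        ∃ a : ℕ, 1 ≤ a ∧ a ≤ 5 ∧ ((a:ℝ)-1)/5 ≤ x 0 ∧ x 0 ≤ (a:ℝ)/5 := by
      obtain ⟨h0, h1⟩ := hx0
      by_cases c1 : x 0 ≤ 1/5
      · exact ⟨1, le_rfl, by norm_num, by push_cast; linarith, by push_cast; linarith⟩
      · by_cases c2 : x 0 ≤ 2/5
        · exact ⟨2, by norm_num, by norm_num, by push_cast; linarith, by push_cast; linarith⟩
        · by_cases c3 : x 0 ≤ 3/5
          · exact ⟨3, by norm_num, by norm_num, by push_cast; linarith, by push_cast; linarith⟩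
          · by_cases c4 : x 0 ≤ 4/5
            · exact ⟨4, by norm_num, by norm_num, by push_cast; linarith, by push_cast; linarith⟩
            · exact ⟨5, by norm_num, by norm_num, by push_cast; linarith, by push_cast; linarith⟩
    have hl'1 : (1:ℕ) ≤ l' := by rcases hl'c with h | h <;> omega
    have hl'5 : l' ≤ 5 := by rcases hl'c with h | h <;> omega
    have hG1s := G1_hull (hs 1 le_rfl)
    simp only [mem_setOf_eq, mem_Icc] at hG1s
    have hs0 : 0 ≤ 5 * x 1 - ((l':ℝ) - 1) := by rcases hG1s with h | h <;> linarith [h.1]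
    have hs1 : 5 * x 1 - ((l':ℝ) - 1) ≤ 1 := by
      rcases hG1s with h | h
      · linarith [h.2]
      · linarith [h.2]
    simp only [Fn, mem_iUnion, exists_prop]
    refine ⟨![a, l'], ?_, WithLp.toLp 2 (fun i => 5 * x i - ((![a, l'] i : ℝ) - 1) : Fin 2 → ℝ), ?_, ?_⟩
    · -- cube 2 1 ![a,l'] ∈ QcolOf 2 1 (F1 2)
      refine ⟨⟨![a, l'], ?_, rfl⟩, ?_⟩
      · intro i
        fin_cases i
        · exact ⟨ha1, by norm_num; omega⟩
        · exact ⟨hl'1, by norm_num; omega⟩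
      · -- interior ∩ F1 2 nonempty: center-ish point
        refine ⟨WithLp.toLp 2 (fun i => ((![a, l'] i : ℝ) - 1)/5 + 1/10 : Fin 2 → ℝ),
          box_subset_interior_cube ?_, ?_, ?_⟩
        · intro i
          constructor
          · show ((![a, l'] i : ℝ) - 1) / 5 ^ 1 < ((![a, l'] i : ℝ) - 1)/5 + 1/10
            norm_num
          · show ((![a, l'] i : ℝ) - 1)/5 + 1/10 < (![a, l'] i : ℝ) / 5 ^ 1
            norm_num; linarith
        · -- in F0 2
          intro i
          fin_cases i
          · show ((a:ℝ) - 1)/5 + 1/10 ∈ Icc (0:ℝ) 1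
            have c1 : (1:ℝ) ≤ a := by exact_mod_cast ha1
            have c5 : (a:ℝ) ≤ 5 := by exact_mod_cast ha5
            constructor <;> [linarith; linarith]
          · show ((l':ℝ) - 1)/5 + 1/10 ∈ Icc (0:ℝ) 1
            have c1 : (1:ℝ) ≤ l' := by exact_mod_cast hl'1
            have c5 : (l':ℝ) ≤ 5 := by exact_mod_cast hl'5
            constructor <;> [linarith; linarith]
        · -- not in removed cross
          intro hmem
          simp only [mem_iUnion, mem_setOf_eq, mem_union, mem_Ioo] at hmem
          obtain ⟨i, h1, h2, h3⟩ := hmem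
          fin_cases i
          · have h4 : 2/5 < ((l':ℝ) - 1)/5 + 1/10 ∧ ((l':ℝ) - 1)/5 + 1/10 < 3/5 :=
              h3 1 (by decide)
            rcases hl'c with h | h <;> rw [h] at h4 <;> push_cast at h4 <;>
              linarith [h4.1, h4.2]
          · have h2' : (1/5 < ((l':ℝ) - 1)/5 + 1/10 ∧ ((l':ℝ) - 1)/5 + 1/10 < 2/5) ∨
                (3/5 < ((l':ℝ) - 1)/5 + 1/10 ∧ ((l':ℝ) - 1)/5 + 1/10 < 4/5) := h2
            rcases h2' with h2 | h2 <;> rcases hl'c with h | h <;> rw [h] at h2 <;>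
              push_cast at h2 <;> linarith [h2.1, h2.2]
    · -- the preimage point is in Fn 2 (n+1)
      apply ih (n+1) (by omega)
      · show 5 * x 0 - ((![a, l'] (0 : Fin 2) : ℝ) - 1) ∈ Icc (0:ℝ) 1
        simp only [Matrix.cons_val_zero]
        exact ⟨by linarith, by linarith⟩
      · intro m hm
        have hgoal := hs m hm
        have heq : (fun _ : Fin 1 => 5 * x 1 - ((l':ℝ) - 1))
            = (fun _ : Fin 1 => 5 * x 1 - ((![a, l'] (1 : Fin 2) : ℝ) - 1)) := by
          simp [Matrix.cons_val_one, Matrix.head_cons]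
        rw [heq] at hgoal
        exact hgoal
    · -- psi maps it back to x
      ext i
      show ((![a, l'] i : ℝ) - 1) / 5 ^ 1 + (5 * x i - ((![a, l'] i : ℝ) - 1)) / 5 ^ 1 = x i
      ring

lemma statement12_aux :
    {x : Pt 2 | x 0 ∈ Icc (0 : ℝ) 1 ∧ WithLp.toLp 2 (fun _ : Fin 1 => x 1) ∈ Gset 1} ⊆ Fset 2 := by
  intro x hx
  obtain ⟨hx0, hxG⟩ := hx
  obtain ⟨-, hGn⟩ := hxG
  have ht : ∀ m, 1 ≤ m → WithLp.toLp 2 (fun _ : Fin 1 => x 1) ∈ Gn 1 m := by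
    intro m hm
    simp only [mem_iInter] at hGn
    exact hGn m hm
  intro s hsmem
  simp only [mem_range] at hsmem
  obtain ⟨n, rfl⟩ := hsmem
  exact main_aux n x hx0 ht

end

/-- `[0,1] × G⁽¹⁾ ⊆ F⁽²⁾`. -/
theorem statement12 :
    {x : Pt 2 | x 0 ∈ Icc (0 : ℝ) 1 ∧ WithLp.toLp 2 (fun _ : Fin 1 => x 1) ∈ Gset 1} ⊆ Fset 2 :=
  statement12_aux
end

section
/- The product set [0,1] × G^(2) is contained in F^(3), where G^(2) ⊆ [0,1]^2 is the boundary-frame generalized Sierpiński carpet of the two-dimensional construction. -/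
open Set MeasureTheory Filter
open scoped Classical

section Aux

open Set

lemma strictBox_subset_interior (d n : ℕ) (l : Fin d → ℕ) :
    {x : Pt d | ∀ i, ((l i : ℝ) - 1) / 5 ^ n < x i ∧ x i < (l i : ℝ) / 5 ^ n}
      ⊆ interior (cube d n l) := by
  apply interior_maximal
  · intro x hx i
    exact ⟨(hx i).1.le, (hx i).2.le⟩
  · have heq : {x : Pt d | ∀ i, ((l i : ℝ) - 1) / 5 ^ n < x i ∧ x i < (l i : ℝ) / 5 ^ n}
        = ⋂ i, ((fun x : Pt d => x i) ⁻¹' Set.Ioo (((l i : ℝ) - 1) / 5 ^ n) ((l i : ℝ) / 5 ^ n)) := by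
      ext x
      simp [Set.mem_iInter, Set.mem_Ioo]
    rw [heq]
    exact isOpen_iInter_of_finite fun i => isOpen_Ioo.preimage (PiLp.continuous_apply 2 _ i)

lemma interior_cube_subset (d n : ℕ) (l : Fin d → ℕ) :
    interior (cube d n l)
      ⊆ {x : Pt d | ∀ i, ((l i : ℝ) - 1) / 5 ^ n < x i ∧ x i < (l i : ℝ) / 5 ^ n} := by
  intro x hx i
  obtain ⟨ε, hε, hball⟩ := Metric.isOpen_iff.mp isOpen_interior x hx
  have hsub : Metric.ball x ε ⊆ cube d n l := hball.trans interior_subset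
  have hd : ∀ c : ℝ, |c| < ε → x + EuclideanSpace.single i c ∈ cube d n l := by
    intro c hc
    apply hsub
    rw [Metric.mem_ball, dist_self_add_left, EuclideanSpace.norm_single]
    exact hc
  have h1 := hd (ε/2) (by rw [abs_of_pos (by linarith)]; linarith)
  have h2 := hd (-(ε/2)) (by rw [abs_neg, abs_of_pos (by linarith)]; linarith)
  have e1 := (h1 i).2
  have e2 := (h2 i).1
  simp only [PiLp.add_apply, EuclideanSpace.single_apply, if_pos rfl, if_true] at e1 e2
  constructor <;> linarith

lemma G1_prop {y : Pt 2} (hy : y ∈ G1 2) :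
    y ∈ F0 2 ∧ ∃ j : Fin 2, y j ≤ 1/5 ∨ 4/5 ≤ y j := by
  rw [G1] at hy
  rw [Set.mem_iUnion₂] at hy
  obtain ⟨Q, ⟨⟨⟨l0, hl0, rfl⟩, -⟩, z, hzQ, hzF⟩, hyQ⟩ := hy
  have hyc : ∀ i, ((l0 i : ℝ) - 1) / 5 ≤ y i ∧ y i ≤ (l0 i : ℝ) / 5 := by
    intro i
    have := hyQ i
    simpa using this
  have hzc : ∀ i, ((l0 i : ℝ) - 1) / 5 ≤ z i ∧ z i ≤ (l0 i : ℝ) / 5 := by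
    intro i
    have := hzQ i
    simpa using this
  constructor
  · intro i
    have h1 := (hl0 i).1
    have h5 := (hl0 i).2
    have h1' : (1 : ℝ) ≤ (l0 i : ℝ) := by exact_mod_cast h1
    have h5' : (l0 i : ℝ) ≤ 5 := by exact_mod_cast h5
    constructor
    · linarith [(hyc i).1]
    · linarith [(hyc i).2]
  · -- z is on the frontier of F0 2
    have hzi : z ∉ interior (F0 2) := by
      intro h
      exact hzF.2 h
    have hz : ∃ j : Fin 2, z j ≤ 0 ∨ 1 ≤ z j := by
      by_contra h
      push_neg at h
      apply hzi
      have hopen : IsOpen {x : Pt 2 | ∀ j, 0 < x j ∧ x j < 1} := by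
        have heq : {x : Pt 2 | ∀ j, 0 < x j ∧ x j < 1}
            = ⋂ i, ((fun x : Pt 2 => x i) ⁻¹' Set.Ioo (0:ℝ) 1) := by
          ext x
          simp [Set.mem_iInter, Set.mem_Ioo]
        rw [heq]
        exact isOpen_iInter_of_finite fun i => isOpen_Ioo.preimage (PiLp.continuous_apply 2 _ i)
      have hsub : {x : Pt 2 | ∀ j, 0 < x j ∧ x j < 1} ⊆ interior (F0 2) :=
        interior_maximal (fun x hx i => ⟨(hx i).1.le, (hx i).2.le⟩) hopen
      exact hsub (fun j => h j)
    obtain ⟨j, hj⟩ := hz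
    refine ⟨j, ?_⟩
    have h1 := (hl0 j).1
    have h1' : (1 : ℝ) ≤ (l0 j : ℝ) := by exact_mod_cast h1
    rcases hj with hj | hj
    · left
      have : (l0 j : ℝ) ≤ 1 := by linarith [(hzc j).1]
      have : (l0 j : ℝ) = 1 := le_antisymm this h1'
      have := (hyc j).2
      rw [‹(l0 j : ℝ) = 1›] at this
      linarith
    · right
      have h5 := (hl0 j).2
      have h5' : (l0 j : ℝ) ≤ 5 := by exact_mod_cast h5
      have : (5 : ℝ) ≤ (l0 j : ℝ) := by linarith [(hzc j).2]
      have he : (l0 j : ℝ) = 5 := le_antisymm h5' this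
      have := (hyc j).1
      rw [he] at this
      linarith

lemma mem_F1_3 {x : Pt 3} (h0 : x 0 ∈ Set.Icc (0:ℝ) 1) (h1 : x 1 ∈ Set.Icc (0:ℝ) 1)
    (h2 : x 2 ∈ Set.Icc (0:ℝ) 1)
    (hb : x 1 ≤ 1/5 ∨ 4/5 ≤ x 1 ∨ x 2 ≤ 1/5 ∨ 4/5 ≤ x 2) : x ∈ F1 3 := by
  constructor
  · intro i
    fin_cases i <;> assumption
  · intro hmem
    simp only [Set.mem_iUnion, Set.mem_setOf_eq] at hmem
    obtain ⟨i, hA, hB, hC⟩ := hmem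
    have key : (1/5 < x 1 ∧ x 1 < 4/5) ∧ (1/5 < x 2 ∧ x 2 < 4/5) := by
      fin_cases i
      · have a := hC 1 (by decide)
        have b := hC 2 (by decide)
        simp only [Set.mem_Ioo] at a b
        exact ⟨⟨by linarith [a.1], by linarith [a.2]⟩, ⟨by linarith [b.1], by linarith [b.2]⟩⟩
      · have b := hC 2 (by decide)
        simp only [Set.mem_Ioo] at b
        have hB' : x 1 ∈ Set.Ioo (1/5:ℝ) (2/5) ∪ Set.Ioo (3/5:ℝ) (4/5) := hB
        rcases hB' with a | a <;> simp only [Set.mem_Ioo] at a <;>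
          exact ⟨⟨by linarith [a.1], by linarith [a.2]⟩, ⟨by linarith [b.1], by linarith [b.2]⟩⟩
      · have a := hA 1 (by decide)
        simp only [Set.mem_Ioo] at a
        have hB' : x 2 ∈ Set.Ioo (1/5:ℝ) (2/5) ∪ Set.Ioo (3/5:ℝ) (4/5) := hB
        rcases hB' with b | b <;> simp only [Set.mem_Ioo] at b <;>
          exact ⟨⟨by linarith [a.1], by linarith [a.2]⟩, ⟨by linarith [b.1], by linarith [b.2]⟩⟩
    rcases hb with h | h | h | h <;> linarith [key.1.1, key.1.2, key.2.1, key.2.2]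

lemma main_ind (n : ℕ) : ∀ x : Pt 3, x 0 ∈ Set.Icc (0:ℝ) 1 →
    WithLp.toLp 2 (fun j : Fin 2 => x j.succ) ∈ Gn 2 n → x ∈ Fn 3 n := by
  induction n using Nat.twoStepInduction with
  | zero =>
    intro x h0 hG
    intro i
    fin_cases i
    · exact h0
    · exact hG 0
    · exact hG 1
  | one =>
    intro x h0 hG
    obtain ⟨hF0, j, hj⟩ := G1_prop hG
    apply mem_F1_3 h0 (hF0 0) (hF0 1)
    fin_cases j
    · rcases hj with h | h
      · exact Or.inl h
      · exact Or.inr (Or.inl h)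
    · rcases hj with h | h
      · exact Or.inr (Or.inr (Or.inl h))
      · exact Or.inr (Or.inr (Or.inr h))
  | more n _ ih =>
    intro x h0 hG
    rw [show Gn 2 (n+2) = ⋃ l ∈ {l : Fin 2 → ℕ | cube 2 1 l ∈ QcolOf 2 1 (G1 2)},
        psi 2 1 l '' Gn 2 (n+1) from rfl, Set.mem_iUnion₂] at hG
    obtain ⟨l, hl, y, hyGn, hψ⟩ := hG
    obtain ⟨-, ystar, hyint, hyG1⟩ := hl
    have hystrict := interior_cube_subset 2 1 l hyint
    obtain ⟨hyF0, jb, hjb⟩ := G1_prop hyG1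
    have hlb : ∀ j, 1 ≤ l j ∧ l j ≤ 5 := by
      intro j
      have hs := hystrict j
      have hf := hyF0 j
      simp only [pow_one, Set.mem_setOf_eq] at hs
      have hlt : (0 : ℝ) < (l j : ℝ) := by
        rcases hs with ⟨hs1, hs2⟩
        nlinarith [hf.1]
      have hlt6 : (l j : ℝ) < 6 := by
        rcases hs with ⟨hs1, hs2⟩
        nlinarith [hf.2]
      constructor
      · exact_mod_cast Nat.one_le_iff_ne_zero.mpr (by
          intro h; rw [h] at hlt; simp at hlt)
      · have : l j < 6 := by exact_mod_cast hlt6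
        omega
    -- choose the slab index k for the first coordinate
    obtain ⟨hx0, hx1⟩ := h0
    set k : ℕ := min 5 (Nat.floor (5 * x 0) + 1) with hk
    have hk1 : 1 ≤ k := by
      simp [hk]
    have hk5 : k ≤ 5 := min_le_left _ _
    have hkl : ((k : ℝ) - 1) ≤ 5 * x 0 := by
      have h1 : k ≤ Nat.floor (5 * x 0) + 1 := min_le_right _ _
      have h2 : (Nat.floor (5 * x 0) : ℝ) ≤ 5 * x 0 := Nat.floor_le (by linarith)
      have h3 : (k : ℝ) ≤ (Nat.floor (5 * x 0) : ℝ) + 1 := by exact_mod_cast h1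
      linarith
    have hkr : 5 * x 0 ≤ (k : ℝ) := by
      rcases le_or_gt (Nat.floor (5 * x 0) + 1) 5 with h | h
      · have hke : k = Nat.floor (5 * x 0) + 1 := by
          rw [hk, min_eq_right h]
        have := Nat.lt_floor_add_one (5 * x 0)
        rw [hke]
        push_cast
        linarith
      · have hke : k = 5 := by
          rw [hk, min_eq_left (by omega)]
        rw [hke]
        push_cast
        linarith
    have hk1' : (1 : ℝ) ≤ (k : ℝ) := by exact_mod_cast hk1
    have hk5' : (k : ℝ) ≤ 5 := by exact_mod_cast hk5
    set l' : Fin 3 → ℕ := Fin.cons k l with hl'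
    set x' : Pt 3 := WithLp.toLp 2 (Fin.cons (5 * x 0 - ((k : ℝ) - 1)) (fun j => y j)) with hx'
    rw [show Fn 3 (n+2) = ⋃ l ∈ {l : Fin 3 → ℕ | cube 3 1 l ∈ QcolOf 3 1 (F1 3)},
        psi 3 1 l '' Fn 3 (n+1) from rfl, Set.mem_iUnion₂]
    refine ⟨l', ?_, x', ?_, ?_⟩
    · -- cube 3 1 l' ∈ QcolOf 3 1 (F1 3)
      constructor
      · refine ⟨l', fun i => ?_, rfl⟩
        refine Fin.cases ?_ (fun j => ?_) i
        · simpa [hl'] using ⟨hk1, hk5⟩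
        · simpa [hl'] using hlb j
      · -- interior meets F1 3
        set p : Pt 3 := WithLp.toLp 2 (Fin.cons ((2 * (k : ℝ) - 1) / 10) (fun j => ystar j))
          with hp
        refine ⟨p, ?_, ?_⟩
        · apply strictBox_subset_interior
          intro i
          refine Fin.cases ?_ (fun j => ?_) i
          · simp only [hp, hl', Fin.cons_zero, pow_one]
            constructor <;> · push_cast; linarith
          · have hs := hystrict j
            simp only [pow_one, Set.mem_setOf_eq] at hs
            simpa [hp, hl', pow_one] using hs
        · apply mem_F1_3
          · show (2 * (k : ℝ) - 1) / 10 ∈ Set.Icc (0:ℝ) 1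
            constructor <;> linarith
          · exact hyF0 0
          · exact hyF0 1
          · fin_cases jb
            · rcases hjb with h | h
              · exact Or.inl h
              · exact Or.inr (Or.inl h)
            · rcases hjb with h | h
              · exact Or.inr (Or.inr (Or.inl h))
              · exact Or.inr (Or.inr (Or.inr h))
    · -- x' ∈ Fn 3 (n+1)
      apply ih
      · show 5 * x 0 - ((k : ℝ) - 1) ∈ Set.Icc (0:ℝ) 1
        constructor <;> linarith
      · have he : WithLp.toLp 2 (fun j : Fin 2 => x' j.succ) = y := by
          ext j
          exact Fin.cons_succ (α := fun _ => ℝ) (5 * x 0 - ((k : ℝ) - 1)) (fun j => y j) j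
        rw [he]
        exact hyGn
    · -- psi 3 1 l' x' = x
      ext i
      refine Fin.cases ?_ (fun j => ?_) i
      · show ((l' 0 : ℝ) - 1) / 5 ^ 1 + x' 0 / 5 ^ 1 = x 0
        simp only [hl', hx', Fin.cons_zero, pow_one]
        ring
      · show ((l' j.succ : ℝ) - 1) / 5 ^ 1 + x' j.succ / 5 ^ 1 = x j.succ
        have := congrArg (fun z : Pt 2 => z j) hψ
        simp only [hl', hx', Fin.cons_succ]
        exact this

end Aux

/-- `[0,1] × G⁽²⁾ ⊆ F⁽³⁾`. -/
theorem statement13 :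
    {x : Pt 3 | x 0 ∈ Icc (0 : ℝ) 1 ∧ WithLp.toLp 2 (fun j : Fin 2 => x j.succ) ∈ Gset 2} ⊆ Fset 3 := by
  intro x hx
  obtain ⟨h0, hG⟩ := hx
  obtain ⟨hF0, hGn⟩ := hG
  rw [Fset, Set.mem_iInter]
  intro n
  apply main_ind n x h0
  cases n with
  | zero => exact hF0
  | succ m =>
    have := Set.mem_iInter.mp hGn (m+1)
    exact Set.mem_iInter.mp this (Nat.succ_le_succ (Nat.zero_le m))
end

section
/- For every integer m ≥ 1, the number of level-(m+1) squares whose interior meets G^(2) ∩ [0,1/5]^2 equals 16^m; that is, #Q_{m+1}^(2)(G^(2) ∩ [0,1/5]^2) = 16^m. -/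
open Set MeasureTheory Filter
open scoped Classical

namespace Aux15

/-! ### Basic cube lemmas -/

lemma cube_eq_pi (d n : ℕ) (l : Fin d → ℕ) :
    cube d n l = (PiLp.homeomorph 2 (fun _ : Fin d => ℝ)) ⁻¹' Set.pi Set.univ (fun i => Icc (((l i : ℝ) - 1) / 5 ^ n) ((l i : ℝ) / 5 ^ n)) := by
  ext x
  exact ⟨fun h i _ => h i, fun h i => h i (Set.mem_univ i)⟩

lemma interior_cube (d n : ℕ) (l : Fin d → ℕ) :
    interior (cube d n l) =
      {x : Pt d | ∀ i, ((l i : ℝ) - 1) / 5 ^ n < x i ∧ x i < (l i : ℝ) / 5 ^ n} := by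
  rw [cube_eq_pi, ← Homeomorph.preimage_interior, interior_pi_set Set.finite_univ]
  ext x
  simp only [interior_Icc]
  exact ⟨fun h i => h i (Set.mem_univ i), fun h i _ => h i⟩

lemma five_pow_pos (n : ℕ) : (0 : ℝ) < 5 ^ n := by positivity

lemma cube_subset_index {d n : ℕ} {l l' : Fin d → ℕ}
    (h : cube d n l ⊆ cube d n l') (i : Fin d) : l i ≤ l' i := by
  have hx : (WithLp.toLp 2 (fun j => (l j : ℝ) / 5 ^ n) : Pt d) ∈ cube d n l := by
    intro j
    refine ⟨?_, le_refl _⟩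
    exact (div_le_div_iff_of_pos_right (five_pow_pos n)).mpr (by linarith)
  have h2 := (h hx i).2
  have h5 := five_pow_pos n
  have : (l i : ℝ) ≤ (l' i : ℝ) := by
    rwa [div_le_div_iff_of_pos_right h5] at h2
  exact_mod_cast this

lemma cube_inj {d n : ℕ} {l l' : Fin d → ℕ} (h : cube d n l = cube d n l') : l = l' := by
  funext i
  exact le_antisymm (cube_subset_index h.le i) (cube_subset_index h.ge i)

lemma index_eq_of_mem_interior {d n : ℕ} {l l' : Fin d → ℕ} {x : Pt d}
    (hx : x ∈ interior (cube d n l)) (hx' : x ∈ cube d n l') : l = l' := by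
  rw [interior_cube] at hx
  funext i
  have h1 := hx i
  have h2 := hx' i
  have h5 := five_pow_pos n
  have a1 : (l i : ℝ) - 1 < l' i := by
    have := lt_of_lt_of_le h1.1 h2.2
    rwa [div_lt_div_iff_of_pos_right h5] at this
  have a2 : (l' i : ℝ) - 1 < l i := by
    have := lt_of_le_of_lt h2.1 h1.2
    rwa [div_lt_div_iff_of_pos_right h5] at this
  have b1 : (l i : ℝ) < (l' i : ℝ) + 1 := by linarith
  have b2 : (l' i : ℝ) < (l i : ℝ) + 1 := by linarith
  have c1 : l i < l' i + 1 := by exact_mod_cast b1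
  have c2 : l' i < l i + 1 := by exact_mod_cast b2
  omega

lemma cube_subset_F0 {n : ℕ} {l : Fin 2 → ℕ} (hb : ∀ i, 1 ≤ l i ∧ l i ≤ 5 ^ n) :
    cube 2 n l ⊆ F0 2 := by
  intro x hx i
  have h1 := (hx i).1
  have h2 := (hx i).2
  have h5 := five_pow_pos n
  have c1 : (1 : ℝ) ≤ l i := by exact_mod_cast (hb i).1
  have c2 : (l i : ℝ) ≤ 5 ^ n := by exact_mod_cast (hb i).2
  constructor
  · have : (0 : ℝ) ≤ ((l i : ℝ) - 1) / 5 ^ n := div_nonneg (by linarith) (le_of_lt h5)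
    linarith
  · have : (l i : ℝ) / 5 ^ n ≤ 1 := by
      rw [div_le_one h5]; exact c2
    linarith

/-! ### F0, frontier -/

lemma F0_eq_pi (d : ℕ) : F0 d = (PiLp.homeomorph 2 (fun _ : Fin d => ℝ)) ⁻¹' Set.pi Set.univ (fun _ => Icc (0 : ℝ) 1) := by
  ext x
  exact ⟨fun h i _ => h i, fun h i => h i (Set.mem_univ i)⟩

lemma isClosed_F0 (d : ℕ) : IsClosed (F0 d) := by
  rw [F0_eq_pi]; exact (isClosed_set_pi (fun i _ => isClosed_Icc)).preimage (PiLp.homeomorph 2 _).continuous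

lemma interior_F0 (d : ℕ) : interior (F0 d) = {x : Pt d | ∀ i, x i ∈ Ioo (0 : ℝ) 1} := by
  rw [F0_eq_pi, ← Homeomorph.preimage_interior, interior_pi_set Set.finite_univ]
  ext x
  simp only [interior_Icc]
  exact ⟨fun h i => h i (Set.mem_univ i), fun h i _ => h i⟩

lemma mem_frontier_F0 {d : ℕ} {x : Pt d} (hx : x ∈ F0 d) (h : ∃ i, x i = 0 ∨ x i = 1) :
    x ∈ frontier (F0 d) := by
  rw [(isClosed_F0 d).frontier_eq]
  refine ⟨hx, fun hint => ?_⟩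
  rw [interior_F0] at hint
  obtain ⟨i, hi⟩ := h
  have := hint i
  rcases hi with hi | hi <;> rw [hi] at this <;> simp at this

lemma frontier_F0_subset (d : ℕ) :
    frontier (F0 d) ⊆ {x : Pt d | x ∈ F0 d ∧ ∃ i, x i = 0 ∨ x i = 1} := by
  intro x hx
  rw [(isClosed_F0 d).frontier_eq] at hx
  obtain ⟨h1, h2⟩ := hx
  refine ⟨h1, ?_⟩
  by_contra h
  push_neg at h
  apply h2
  rw [interior_F0]
  intro i
  have hi := h1 i
  have hni := h i
  exact ⟨lt_of_le_of_ne hi.1 (Ne.symm hni.1), lt_of_le_of_ne hi.2 hni.2⟩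

/-! ### F1 helper -/

lemma mem_F1_of {x : Pt 2} (hx : x ∈ F0 2) (h : ∃ j, x j ≤ 1/5 ∨ 4/5 ≤ x j) : x ∈ F1 2 := by
  refine ⟨hx, fun hmem => ?_⟩
  simp only [Set.mem_iUnion] at hmem
  obtain ⟨i, hi⟩ := hmem
  obtain ⟨j, hj⟩ := h
  have hIoo : x j ∈ Ioo (1/5 : ℝ) (4/5) := by
    rcases lt_trichotomy j i with h' | h' | h'
    · have := hi.1 j h'
      exact ⟨by linarith [this.1], by linarith [this.2]⟩
    · subst h'
      rcases hi.2.1 with h'' | h''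
      · exact ⟨h''.1, by linarith [h''.2]⟩
      · exact ⟨by linarith [h''.1], h''.2⟩
    · have := hi.2.2 j h'
      exact ⟨by linarith [this.1], by linarith [this.2]⟩
  rcases hj with hj | hj
  · linarith [hIoo.1]
  · linarith [hIoo.2]

end Aux15

namespace Aux15

/-! ### The 16 boundary positions -/

def BF : Finset (Fin 2 → ℕ) :=
  ((Finset.Icc 1 5 ×ˢ Finset.Icc 1 5).filter
    (fun p => p.1 = 1 ∨ p.1 = 5 ∨ p.2 = 1 ∨ p.2 = 5)).image (fun p => ![p.1, p.2])

lemma BF_card : BF.card = 16 := by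
  rw [BF, Finset.card_image_of_injOn]
  · decide
  · intro p _ q _ h
    have h0 := congrFun h 0
    have h1 := congrFun h 1
    simp at h0 h1
    exact Prod.ext h0 h1

lemma mem_BF {a : Fin 2 → ℕ} :
    a ∈ BF ↔ (∀ i, 1 ≤ a i ∧ a i ≤ 5) ∧ (a 0 = 1 ∨ a 0 = 5 ∨ a 1 = 1 ∨ a 1 = 5) := by
  constructor
  · intro h
    simp only [BF, Finset.mem_image, Finset.mem_filter, Finset.mem_product, Finset.mem_Icc] at h
    obtain ⟨p, ⟨⟨h1, h2⟩, h3⟩, rfl⟩ := h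
    constructor
    · intro i; fin_cases i <;> simp <;> omega
    · simpa using h3
  · rintro ⟨h1, h2⟩
    simp only [BF, Finset.mem_image, Finset.mem_filter, Finset.mem_product, Finset.mem_Icc]
    refine ⟨(a 0, a 1), ⟨⟨⟨(h1 0).1, (h1 0).2⟩, ⟨(h1 1).1, (h1 1).2⟩⟩, h2⟩, ?_⟩
    funext i; fin_cases i <;> rfl

/-! ### Center and corner points of level-1 cubes -/

noncomputable def center (a : Fin 2 → ℕ) : Pt 2 := WithLp.toLp 2 (fun i => (2 * (a i : ℝ) - 1) / 10)

lemma center_mem_interior (a : Fin 2 → ℕ) : center a ∈ interior (cube 2 1 a) := by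
  rw [interior_cube]
  intro i
  simp only [center, pow_one, PiLp.toLp_apply]
  constructor <;> linarith

noncomputable def corner (a : Fin 2 → ℕ) : Pt 2 :=
  WithLp.toLp 2 (fun i => if a i = 1 then (0:ℝ) else if a i = 5 then 1 else ((a i : ℝ) - 1) / 5)

lemma cube_mem_G1col {a : Fin 2 → ℕ} (ha : a ∈ BF) :
    cube 2 1 a ∈ {Q | Q ∈ QcolOf 2 1 (F1 2) ∧ (Q ∩ frontier (F0 2)).Nonempty} := by
  obtain ⟨hab, hd⟩ := mem_BF.1 ha
  have hcast : ∀ i, (1:ℝ) ≤ (a i : ℝ) ∧ (a i : ℝ) ≤ 5 := fun i =>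
    ⟨by exact_mod_cast (hab i).1, by exact_mod_cast (hab i).2⟩
  constructor
  · refine ⟨⟨a, fun i => ⟨(hab i).1, by rw [pow_one]; exact (hab i).2⟩, rfl⟩, ?_⟩
    refine ⟨center a, center_mem_interior a, ?_⟩
    apply mem_F1_of
    · intro i
      have := hcast i
      constructor <;> simp only [center, PiLp.toLp_apply] <;> linarith
    · rcases hd with h | h | h | h
      · exact ⟨0, Or.inl (by simp only [center, h]; norm_num)⟩
      · exact ⟨0, Or.inr (by simp only [center, h]; norm_num)⟩
      · exact ⟨1, Or.inl (by simp only [center, h]; norm_num)⟩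
      · exact ⟨1, Or.inr (by simp only [center, h]; norm_num)⟩
  · refine ⟨corner a, ?_, ?_⟩
    · intro i
      simp only [corner, pow_one, PiLp.toLp_apply]
      by_cases h1 : a i = 1
      · rw [if_pos h1, h1]; norm_num
      · rw [if_neg h1]
        by_cases h5 : a i = 5
        · rw [if_pos h5, h5]; norm_num
        · rw [if_neg h5]
          have := hcast i
          exact ⟨le_refl _, by linarith⟩
    · apply mem_frontier_F0
      · intro i
        simp only [corner, PiLp.toLp_apply]
        have := hcast i
        split_ifs <;> constructor <;> norm_num <;> linarith
      · rcases hd with h | h | h | h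
        · exact ⟨0, Or.inl (by simp [corner, h])⟩
        · exact ⟨0, Or.inr (by simp [corner, h])⟩
        · exact ⟨1, Or.inl (by simp [corner, h])⟩
        · exact ⟨1, Or.inr (by simp [corner, h])⟩

lemma G1_eq : G1 2 = ⋃ l ∈ (BF : Set (Fin 2 → ℕ)), cube 2 1 l := by
  apply Set.Subset.antisymm
  · intro x hx
    simp only [G1, Set.mem_iUnion, exists_prop, Set.mem_setOf_eq] at hx
    obtain ⟨Q, ⟨⟨⟨l, hb, rfl⟩, -⟩, y, hyQ, hyF⟩, hxQ⟩ := hx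
    obtain ⟨i, hi⟩ := (frontier_F0_subset 2 hyF).2
    have hBF : l ∈ BF := by
      rw [mem_BF]
      refine ⟨fun j => ⟨(hb j).1, by have := (hb j).2; rwa [pow_one] at this⟩, ?_⟩
      have hl15 : l i = 1 ∨ l i = 5 := by
        rcases hi with hi | hi
        · left
          have h1 := (hyQ i).1
          rw [hi, pow_one] at h1
          have hr : (l i : ℝ) ≤ 1 := by linarith
          have : l i ≤ 1 := by exact_mod_cast hr
          have := (hb i).1
          omega
        · right
          have h2 := (hyQ i).2
          rw [hi, pow_one] at h2
          have hr : (5:ℝ) ≤ (l i : ℝ) := by linarith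
          have h5 : 5 ≤ l i := by exact_mod_cast hr
          have := (hb i).2
          rw [pow_one] at this
          omega
      fin_cases i <;> tauto
    exact Set.mem_biUnion (Finset.mem_coe.2 hBF) hxQ
  · refine Set.iUnion₂_subset fun a ha => ?_
    intro x hx
    exact Set.mem_biUnion (cube_mem_G1col (Finset.mem_coe.1 ha)) hx

lemma setOf_QcolOf_G1 : {l : Fin 2 → ℕ | cube 2 1 l ∈ QcolOf 2 1 (G1 2)} = ↑BF := by
  ext l
  simp only [Set.mem_setOf_eq, Finset.mem_coe]
  constructor
  · rintro ⟨⟨l', hb, hcube⟩, x, hxi, hxG⟩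
    have hll : l = l' := cube_inj hcube
    subst hll
    rw [G1_eq] at hxG
    simp only [Set.mem_iUnion, exists_prop, Finset.mem_coe] at hxG
    obtain ⟨a, haBF, hxa⟩ := hxG
    rwa [index_eq_of_mem_interior hxi hxa]
  · intro ha
    have hb := (mem_BF.1 ha).1
    refine ⟨⟨l, fun i => ⟨(hb i).1, by rw [pow_one]; exact (hb i).2⟩, rfl⟩, ?_⟩
    refine ⟨center l, center_mem_interior l, ?_⟩
    rw [G1_eq]
    exact Set.mem_biUnion (Finset.mem_coe.2 ha) (interior_subset (center_mem_interior l))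

/-! ### psi lemmas -/

def comb (e : ℕ) (a b : Fin 2 → ℕ) : Fin 2 → ℕ := fun i => (a i - 1) * e + b i

lemma comb_cast {a b : Fin 2 → ℕ} (ha : ∀ i, 1 ≤ a i) (e : ℕ) (i : Fin 2) :
    ((comb e a b i : ℕ) : ℝ) = ((a i : ℝ) - 1) * e + b i := by
  simp only [comb]
  push_cast [Nat.cast_sub (ha i)]
  ring

lemma psi_image_cube {a b : Fin 2 → ℕ} (ha : ∀ i, 1 ≤ a i) (k : ℕ) :
    psi 2 1 a '' cube 2 k b = cube 2 (k + 1) (comb (5 ^ k) a b) := by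
  have h5 := five_pow_pos k
  have h51 : (0:ℝ) < 5 ^ (k+1) := five_pow_pos (k+1)
  have hps : (5:ℝ) ^ (k+1) = 5^k * 5 := pow_succ 5 k
  ext x
  constructor
  · rintro ⟨y, hy, rfl⟩ i
    have h1 := (hy i).1
    have h2 := (hy i).2
    rw [div_le_iff₀ h5] at h1
    rw [le_div_iff₀ h5] at h2
    have hpsi : psi 2 1 a y i = ((a i : ℝ) - 1) / 5 + y i / 5 := by
      simp [psi]
    have hexp : (((a i:ℝ)-1)/5 + y i/5) * (5^k*5) = ((a i:ℝ)-1)*5^k + y i*5^k := by ring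
    rw [hpsi, comb_cast ha]
    push_cast
    constructor
    · rw [div_le_iff₀ h51, hps, hexp]
      linarith
    · rw [le_div_iff₀ h51, hps, hexp]
      linarith
  · intro hx
    refine ⟨WithLp.toLp 2 (fun i => 5 * x i - ((a i : ℝ) - 1)), fun i => ?_, PiLp.ext fun i => ?_⟩
    · have h1 := (hx i).1
      have h2 := (hx i).2
      rw [comb_cast ha] at h1 h2
      push_cast at h1 h2
      rw [div_le_iff₀ h51, hps] at h1
      rw [le_div_iff₀ h51, hps] at h2
      have hexp2 : (5 * x i - ((a i:ℝ)-1)) * 5^k = x i * (5^k*5) - ((a i:ℝ)-1)*5^k := by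
        ring
      constructor
      · show ((b i:ℝ) - 1) / 5^k ≤ 5 * x i - ((a i:ℝ)-1)
        rw [div_le_iff₀ h5, hexp2]
        linarith
      · show 5 * x i - ((a i:ℝ)-1) ≤ (b i:ℝ) / 5^k
        rw [le_div_iff₀ h5, hexp2]
        linarith
    · show ((a i : ℝ) - 1) / 5 ^ 1 + (5 * x i - ((a i : ℝ) - 1)) / 5 ^ 1 = x i
      rw [pow_one]
      ring

lemma psi_comp {a b : Fin 2 → ℕ} (ha : ∀ i, 1 ≤ a i) (n : ℕ) (x : Pt 2) :
    psi 2 1 a (psi 2 n b x) = psi 2 (n + 1) (comb (5 ^ n) a b) x := by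
  ext i
  show ((a i : ℝ) - 1) / 5 ^ 1 + (((b i : ℝ) - 1) / 5 ^ n + x i / 5 ^ n) / 5 ^ 1
      = ((comb (5 ^ n) a b i : ℕ) - 1) / 5 ^ (n+1) + x i / 5 ^ (n+1)
  rw [comb_cast ha, pow_one, pow_succ]
  have h5 := (five_pow_pos n).ne'
  field_simp
  push_cast
  ring

lemma psi_mem_cube {n : ℕ} {l : Fin 2 → ℕ} {y : Pt 2} (hy : y ∈ F0 2) :
    psi 2 n l y ∈ cube 2 n l := by
  intro i
  have h5 := five_pow_pos n
  have hy1 := hy i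
  constructor
  · show ((l i:ℝ)-1)/5^n ≤ ((l i:ℝ)-1)/5^n + y i/5^n
    have : 0 ≤ y i / 5^n := div_nonneg hy1.1 h5.le
    linarith
  · show ((l i:ℝ)-1)/5^n + y i/5^n ≤ (l i:ℝ)/5^n
    have h1 : y i/5^n ≤ 1/5^n := (div_le_div_iff_of_pos_right h5).mpr hy1.2
    have h2 : ((l i:ℝ)-1)/5^n + 1/5^n = (l i:ℝ)/5^n := by
      rw [← add_div]
      congr 1
      ring
    linarith

/-! ### The valid-word index sets -/

def VF : ℕ → Finset (Fin 2 → ℕ)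
  | 0 => BF
  | n + 1 => (BF ×ˢ VF n).image fun p => comb (5 ^ (n + 1)) p.1 p.2

lemma mem_VF_succ {n : ℕ} {l : Fin 2 → ℕ} :
    l ∈ VF (n+1) ↔ ∃ a ∈ BF, ∃ b ∈ VF n, comb (5 ^ (n+1)) a b = l := by
  constructor
  · intro h
    simp only [VF, Finset.mem_image, Finset.mem_product, Prod.exists] at h
    obtain ⟨a, b, ⟨ha, hb⟩, hl⟩ := h
    exact ⟨a, ha, b, hb, hl⟩
  · rintro ⟨a, ha, b, hb, hl⟩
    simp only [VF, Finset.mem_image, Finset.mem_product, Prod.exists]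
    exact ⟨a, b, ⟨ha, hb⟩, hl⟩

lemma VF_bounds : ∀ n, ∀ l ∈ VF n, ∀ i, 1 ≤ l i ∧ l i ≤ 5 ^ (n + 1)
  | 0 => fun l hl i =>
      ⟨((mem_BF.1 hl).1 i).1, by rw [pow_one]; exact ((mem_BF.1 hl).1 i).2⟩
  | n + 1 => by
    intro l hl i
    obtain ⟨a, ha, b, hb, rfl⟩ := mem_VF_succ.1 hl
    have hA := (mem_BF.1 ha).1 i
    have hB := VF_bounds n b hb i
    simp only [comb]
    constructor
    · exact le_trans hB.1 (Nat.le_add_left _ _)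
    · have h4 : a i - 1 ≤ 4 := by omega
      calc (a i - 1) * 5 ^ (n+1) + b i ≤ 4 * 5 ^ (n+1) + 5 ^ (n+1) :=
            Nat.add_le_add (Nat.mul_le_mul h4 (le_refl _)) hB.2
        _ = 5 ^ (n+1+1) := by rw [pow_succ]; ring

lemma comb_inj_nat {e a b a' b' : ℕ} (ha : 1 ≤ a) (ha' : 1 ≤ a')
    (hb : 1 ≤ b) (hbe : b ≤ e) (hb' : 1 ≤ b') (hbe' : b' ≤ e)
    (h : (a - 1) * e + b = (a' - 1) * e + b') : a = a' ∧ b = b' := by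
  have key : ∀ u v c d : ℕ, 1 ≤ c → c ≤ e → 1 ≤ d → u < v →
      u * e + c = v * e + d → False := by
    intro u v c d hc hce hd huv heq
    have h1 : (u + 1) * e ≤ v * e := Nat.mul_le_mul (by omega) (le_refl e)
    rw [add_mul, one_mul] at h1
    obtain ⟨X, hX⟩ : ∃ X, u * e = X := ⟨_, rfl⟩
    obtain ⟨Y, hY⟩ : ∃ Y, v * e = Y := ⟨_, rfl⟩
    rw [hX, hY] at h1 heq
    omega
  rcases Nat.lt_trichotomy a a' with hlt | heq | hlt
  · exact absurd h (fun h => key (a-1) (a'-1) b b' hb hbe hb' (by omega) h)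
  · refine ⟨heq, ?_⟩
    subst heq
    exact Nat.add_left_cancel h
  · exact absurd h.symm (fun h => key (a'-1) (a-1) b' b hb' hbe' hb (by omega) h)

lemma VF_card : ∀ n, (VF n).card = 16 ^ (n + 1)
  | 0 => by rw [show VF 0 = BF from rfl, BF_card]; norm_num
  | n + 1 => by
    have hinj : Set.InjOn (fun p : (Fin 2 → ℕ) × (Fin 2 → ℕ) => comb (5 ^ (n+1)) p.1 p.2)
        ↑(BF ×ˢ VF n) := by
      rintro ⟨a, b⟩ hab ⟨a', b'⟩ hab' h
      simp only [Finset.coe_product, Set.mem_prod, Finset.mem_coe] at hab hab'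
      have hres : ∀ i, a i = a' i ∧ b i = b' i := by
        intro i
        have hA := (mem_BF.1 hab.1).1 i
        have hA' := (mem_BF.1 hab'.1).1 i
        have hB := VF_bounds n b hab.2 i
        have hB' := VF_bounds n b' hab'.2 i
        exact comb_inj_nat hA.1 hA'.1 hB.1 hB.2 hB'.1 hB'.2 (congrFun h i)
      exact Prod.ext (funext fun i => (hres i).1) (funext fun i => (hres i).2)
    rw [show VF (n+1) = (BF ×ˢ VF n).image (fun p => comb (5^(n+1)) p.1 p.2) from rfl,
      Finset.card_image_of_injOn hinj, Finset.card_product, BF_card, VF_card n]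
    rw [pow_succ]
    ring

end Aux15

namespace Aux15

/-! ### Structure of Gn -/

lemma Gn_one : Gn 2 1 = G1 2 := rfl

lemma Gn_zero : Gn 2 0 = F0 2 := rfl

lemma Gn_two_succ_succ (n : ℕ) : Gn 2 (n + 2) =
    ⋃ l ∈ {l : Fin 2 → ℕ | cube 2 1 l ∈ QcolOf 2 1 (G1 2)}, psi 2 1 l '' Gn 2 (n + 1) := rfl

lemma Gn_eq : ∀ n : ℕ, Gn 2 (n + 1) = ⋃ l ∈ (VF n : Set (Fin 2 → ℕ)), cube 2 (n + 1) l
  | 0 => by rw [show Gn 2 (0 + 1) = G1 2 from rfl, G1_eq]; rfl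
  | n + 1 => by
    have IH := Gn_eq n
    have himg : ∀ a ∈ (BF : Set (Fin 2 → ℕ)),
        psi 2 1 a '' (⋃ l ∈ (VF n : Set (Fin 2 → ℕ)), cube 2 (n+1) l)
          = ⋃ b ∈ (VF n : Set (Fin 2 → ℕ)), cube 2 (n+2) (comb (5^(n+1)) a b) := by
      intro a ha
      rw [Set.image_iUnion₂]
      exact Set.iUnion₂_congr fun b _ =>
        psi_image_cube (fun i => ((mem_BF.1 (Finset.mem_coe.1 ha)).1 i).1) (n+1)
    rw [Gn_two_succ_succ, setOf_QcolOf_G1, IH, Set.iUnion₂_congr himg]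
    ext x
    simp only [Set.mem_iUnion, exists_prop, Finset.mem_coe]
    constructor
    · rintro ⟨a, ha, b, hb, hx⟩
      exact ⟨comb (5^(n+1)) a b, mem_VF_succ.2 ⟨a, ha, b, hb, rfl⟩, hx⟩
    · rintro ⟨l, hl, hx⟩
      obtain ⟨a, ha, b, hb, rfl⟩ := mem_VF_succ.1 hl
      exact ⟨a, ha, b, hb, hx⟩

lemma F0_eq_cube : F0 2 = cube 2 0 (fun _ => 1) := by
  ext x
  simp only [cube, F0, Set.mem_setOf_eq, mem_Icc]
  norm_num

lemma psi_image_F0 {a : Fin 2 → ℕ} (ha : ∀ i, 1 ≤ a i) :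
    psi 2 1 a '' F0 2 = cube 2 1 a := by
  rw [F0_eq_cube, psi_image_cube ha 0]
  have hca : comb (5 ^ 0) a (fun _ => 1) = a := by
    funext i
    show (a i - 1) * 5 ^ 0 + 1 = a i
    rw [pow_zero, mul_one]
    have := ha i
    omega
  rw [hca]

lemma cube1_subset_F0 {a : Fin 2 → ℕ} (ha : a ∈ BF) : cube 2 1 a ⊆ F0 2 := by
  apply cube_subset_F0
  intro i
  exact ⟨((mem_BF.1 ha).1 i).1, by rw [pow_one]; exact ((mem_BF.1 ha).1 i).2⟩

lemma Gn_succ_subset : ∀ n : ℕ, Gn 2 (n + 1) ⊆ Gn 2 n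
  | 0 => by
    rw [Gn_one, Gn_zero, G1_eq]
    exact Set.iUnion₂_subset fun a ha => cube1_subset_F0 (Finset.mem_coe.1 ha)
  | 1 => by
    rw [Gn_two_succ_succ 0, setOf_QcolOf_G1, Gn_one]
    refine Set.iUnion₂_subset fun a ha => ?_
    have ha' := Finset.mem_coe.1 ha
    have h1 : psi 2 1 a '' Gn 2 1 ⊆ psi 2 1 a '' F0 2 := Set.image_mono (Gn_succ_subset 0)
    refine h1.trans ?_
    rw [psi_image_F0 (fun i => ((mem_BF.1 ha').1 i).1), G1_eq]
    exact Set.subset_biUnion_of_mem ha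
  | n + 2 => by
    rw [Gn_two_succ_succ (n+1), Gn_two_succ_succ n]
    refine Set.iUnion₂_subset fun a ha => ?_
    refine (Set.image_mono (Gn_succ_subset (n+1))).trans ?_
    exact Set.subset_biUnion_of_mem (u := fun l => psi 2 1 l '' Gn 2 (n + 1)) ha

lemma Gn_subset_of_le {k n : ℕ} (h : k ≤ n) : Gn 2 n ⊆ Gn 2 k := by
  induction h with
  | refl => exact Set.Subset.rfl
  | @step m h ih => exact (Gn_succ_subset m).trans ih

/-! ### A point of Gset in the interior of each valid cube -/

noncomputable def eta : Pt 2 := WithLp.toLp 2 ![(1:ℝ), 1/2]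

lemma v53_mem_BF : ![5, 3] ∈ BF := by
  rw [mem_BF]
  refine ⟨fun i => ?_, Or.inr (Or.inl rfl)⟩
  fin_cases i <;> simp

lemma v11_mem_BF : ![1, 1] ∈ BF := by
  rw [mem_BF]
  refine ⟨fun i => ?_, Or.inl rfl⟩
  fin_cases i <;> simp

lemma eta_mem_cube : eta ∈ cube 2 1 ![5, 3] := by
  intro i
  fin_cases i <;> norm_num [eta, cube]

lemma eta_fixed : psi 2 1 ![5, 3] eta = eta := by
  ext i
  fin_cases i <;> norm_num [psi, eta]

lemma eta_mem_Gn : ∀ j : ℕ, eta ∈ Gn 2 (j + 1)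
  | 0 => by
    rw [show Gn 2 (0+1) = G1 2 from rfl, G1_eq]
    exact Set.mem_biUnion (Finset.mem_coe.2 v53_mem_BF) eta_mem_cube
  | j + 1 => by
    rw [Gn_two_succ_succ j, setOf_QcolOf_G1]
    exact Set.mem_biUnion (Finset.mem_coe.2 v53_mem_BF) ⟨eta, eta_mem_Gn j, eta_fixed⟩

noncomputable def xi : Pt 2 := psi 2 1 ![1, 1] eta

lemma xi_bounds : ∀ i, 0 < xi i ∧ xi i < 1 := by
  intro i
  fin_cases i <;> norm_num [xi, psi, eta]

lemma xi_mem_cube : xi ∈ cube 2 1 ![1, 1] := by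
  intro i
  fin_cases i <;> norm_num [xi, psi, eta, cube]

lemma xi_mem_Gn : ∀ j : ℕ, xi ∈ Gn 2 (j + 1)
  | 0 => by
    rw [show Gn 2 (0+1) = G1 2 from rfl, G1_eq]
    exact Set.mem_biUnion (Finset.mem_coe.2 v11_mem_BF) xi_mem_cube
  | j + 1 => by
    rw [Gn_two_succ_succ j, setOf_QcolOf_G1]
    exact Set.mem_biUnion (Finset.mem_coe.2 v11_mem_BF) ⟨eta, eta_mem_Gn j, rfl⟩

lemma xi_mem_F0 : xi ∈ F0 2 := by
  intro i
  exact ⟨(xi_bounds i).1.le, (xi_bounds i).2.le⟩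

lemma mem_Gset_iff {x : Pt 2} : x ∈ Gset 2 ↔ x ∈ F0 2 ∧ ∀ n, 1 ≤ n → x ∈ Gn 2 n := by
  simp [Gset, Set.mem_inter_iff, Set.mem_iInter]

lemma psi_image_Gn_subset :
    ∀ n, ∀ l ∈ VF n, ∀ j : ℕ, psi 2 (n + 1) l '' Gn 2 (j + 1) ⊆ Gn 2 (n + j + 2)
  | 0 => by
    intro l hl j
    rw [show (0 + j + 2 : ℕ) = j + 2 from by omega, Gn_two_succ_succ j, setOf_QcolOf_G1]
    exact Set.subset_biUnion_of_mem (u := fun a => psi 2 1 a '' Gn 2 (j + 1))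
      (Finset.mem_coe.2 hl)
  | n + 1 => by
    intro l hl j
    obtain ⟨a, ha, b, hb, rfl⟩ := mem_VF_succ.1 hl
    have haone : ∀ i, 1 ≤ a i := fun i => ((mem_BF.1 ha).1 i).1
    have hcomp : psi 2 (n + 1 + 1) (comb (5 ^ (n+1)) a b) '' Gn 2 (j + 1)
        = psi 2 1 a '' (psi 2 (n + 1) b '' Gn 2 (j + 1)) := by
      rw [← Set.image_comp]
      exact Set.image_congr fun x _ => (psi_comp haone (n + 1) x).symm
    rw [hcomp]
    refine (Set.image_mono (psi_image_Gn_subset n b hb j)).trans ?_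
    have := psi_image_Gn_subset 0 a ha (n + j + 1)
    rw [show (0 + (n + j + 1) + 2 : ℕ) = n + 1 + j + 2 from by omega] at this
    rw [show (n + j + 2 : ℕ) = n + j + 1 + 1 from by omega]
    exact this

lemma exists_interior_point (n : ℕ) (l : Fin 2 → ℕ) (hl : l ∈ VF n) :
    ∃ x, x ∈ interior (cube 2 (n + 1) l) ∧ x ∈ Gset 2 := by
  have h5 := five_pow_pos (n + 1)
  have hcube : psi 2 (n + 1) l xi ∈ cube 2 (n + 1) l := psi_mem_cube xi_mem_F0
  refine ⟨psi 2 (n + 1) l xi, ?_, ?_⟩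
  · rw [interior_cube]
    intro i
    have hx := xi_bounds i
    constructor
    · show ((l i : ℝ) - 1) / 5 ^ (n+1) < ((l i : ℝ) - 1) / 5 ^ (n+1) + xi i / 5 ^ (n+1)
      have : 0 < xi i / 5 ^ (n+1) := div_pos hx.1 h5
      linarith
    · show ((l i : ℝ) - 1) / 5 ^ (n+1) + xi i / 5 ^ (n+1) < (l i : ℝ) / 5 ^ (n+1)
      have h1 : xi i / 5 ^ (n+1) < 1 / 5 ^ (n+1) := (div_lt_div_iff_of_pos_right h5).mpr hx.2
      have h2 : ((l i : ℝ) - 1) / 5 ^ (n+1) + 1 / 5 ^ (n+1) = (l i : ℝ) / 5 ^ (n+1) := by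
        rw [← add_div]
        congr 1
        ring
      linarith
  · rw [mem_Gset_iff]
    constructor
    · exact cube_subset_F0 (fun i => VF_bounds n l hl i) hcube
    · intro k hk
      rcases le_or_gt k (n + 1) with hkn | hkn
      · refine Gn_subset_of_le hkn ?_
        rw [Gn_eq n]
        exact Set.mem_biUnion (Finset.mem_coe.2 hl) hcube
      · obtain ⟨j, rfl⟩ : ∃ j, k = n + j + 2 := ⟨k - n - 2, by omega⟩
        exact psi_image_Gn_subset n l hl j ⟨xi, xi_mem_Gn j, rfl⟩

/-! ### Corner decomposition -/

lemma corner_lift {k : ℕ} {l : Fin 2 → ℕ} (hl : l ∈ VF k) : l ∈ VF (k + 1) := by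
  refine mem_VF_succ.2 ⟨![1, 1], v11_mem_BF, l, hl, ?_⟩
  funext i
  fin_cases i <;> simp [comb]

lemma VF_step_down {k : ℕ} {l : Fin 2 → ℕ} (hl : l ∈ VF (k + 1)) (h : ∀ i, l i ≤ 5 ^ (k + 1)) :
    l ∈ VF k := by
  obtain ⟨a, ha, b, hb, rfl⟩ := mem_VF_succ.1 hl
  have ha1 : ∀ i, a i = 1 := by
    intro i
    have hA := (mem_BF.1 ha).1 i
    have hB := VF_bounds k b hb i
    have hi := h i
    by_contra hne
    have h3 : 1 * 5 ^ (k+1) ≤ (a i - 1) * 5 ^ (k+1) := Nat.mul_le_mul (by omega) (le_refl _)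
    rw [one_mul] at h3
    simp only [comb] at hi
    obtain ⟨X, hX⟩ : ∃ X, (a i - 1) * 5 ^ (k+1) = X := ⟨_, rfl⟩
    rw [hX] at h3 hi
    omega
  have hcb : comb (5 ^ (k+1)) a b = b := funext fun i => by simp [comb, ha1 i]
  rwa [hcb]

lemma cube_subset_Qone {k : ℕ} {l : Fin 2 → ℕ} (h1 : ∀ i, 1 ≤ l i) (h2 : ∀ i, l i ≤ 5 ^ (k + 1)) :
    cube 2 (k + 2) l ⊆ Qone 2 := by
  intro x hx i
  have h5 := five_pow_pos (k + 2)
  have hxi := hx i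
  have c1 : (1:ℝ) ≤ l i := by exact_mod_cast h1 i
  have c2 : (l i : ℝ) ≤ 5 ^ (k+1) := by exact_mod_cast h2 i
  constructor
  · have : (0:ℝ) ≤ ((l i : ℝ) - 1) / 5 ^ (k+2) := div_nonneg (by linarith) h5.le
    linarith [hxi.1]
  · have hle : (l i : ℝ) / 5 ^ (k+2) ≤ 1 / 5 := by
      rw [div_le_div_iff₀ h5 (by norm_num : (0:ℝ) < 5)]
      calc (l i : ℝ) * 5 ≤ 5 ^ (k+1) * 5 := by linarith
        _ = 5 ^ (k+2) := (pow_succ 5 (k+1)).symm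
        _ = 1 * 5 ^ (k+2) := (one_mul _).symm
    linarith [hxi.2]

end Aux15

/-- The number of level-`(m+1)` squares whose interior meets `G⁽²⁾ ∩ [0,1/5]²` is `16^m`. -/
theorem statement15 (m : ℕ) (hm : 1 ≤ m) :
    (QcolOf 2 (m + 1) (Gset 2 ∩ Qone 2)).ncard = 16 ^ m := by
  obtain ⟨k, rfl⟩ : ∃ k, m = k + 1 := ⟨m - 1, by omega⟩
  have hset : QcolOf 2 (k + 1 + 1) (Gset 2 ∩ Qone 2)
      = (fun l => cube 2 (k + 1 + 1) l) '' ↑(Aux15.VF k) := by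
    ext Q
    constructor
    · rintro ⟨⟨l, hb, rfl⟩, x, hxi, hxG, hxQ1⟩
      have hG := (Aux15.mem_Gset_iff.1 hxG).2 (k + 1 + 1) (by omega)
      rw [Aux15.Gn_eq (k + 1)] at hG
      simp only [Set.mem_iUnion, exists_prop, Finset.mem_coe] at hG
      obtain ⟨l', hl', hx'⟩ := hG
      have hll : l = l' := Aux15.index_eq_of_mem_interior hxi hx'
      rw [← hll] at hl'
      refine ⟨l, Finset.mem_coe.2 (Aux15.VF_step_down hl' ?_), rfl⟩
      intro i
      rw [Aux15.interior_cube] at hxi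
      have h1 := (hxi i).1
      have h2 := (hxQ1 i).2
      have h5 := Aux15.five_pow_pos (k + 1 + 1)
      have hlt : ((l i : ℝ) - 1) / 5 ^ (k+1+1) < 1 / 5 := lt_of_lt_of_le h1 h2
      rw [div_lt_div_iff₀ h5 (by norm_num : (0:ℝ) < 5)] at hlt
      have hps : (5:ℝ) ^ (k+1+1) = 5 ^ (k+1) * 5 := pow_succ 5 (k+1)
      have hr : (l i : ℝ) < 5 ^ (k+1) + 1 := by
        rw [hps] at hlt
        nlinarith [Aux15.five_pow_pos (k+1)]
      have : l i < 5 ^ (k+1) + 1 := by exact_mod_cast hr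
      omega
    · rintro ⟨l, hl, rfl⟩
      have hlk := Finset.mem_coe.1 hl
      have hl' : l ∈ Aux15.VF (k + 1) := Aux15.corner_lift hlk
      obtain ⟨x, hxi, hxG⟩ := Aux15.exists_interior_point (k + 1) l hl'
      have hbnds := Aux15.VF_bounds k l hlk
      refine ⟨⟨l, fun i => ⟨(hbnds i).1, ?_⟩, rfl⟩, x, hxi, hxG, ?_⟩
      · calc l i ≤ 5 ^ (k+1) := (hbnds i).2
          _ ≤ 5 ^ (k+1+1) := Nat.pow_le_pow_right (by norm_num) (by omega)
      · exact Aux15.cube_subset_Qone (fun i => (hbnds i).1) (fun i => (hbnds i).2)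
          (interior_subset hxi)
  rw [hset, ← Finset.coe_image, Set.ncard_coe_finset,
    Finset.card_image_of_injOn (fun a _ b _ h => Aux15.cube_inj h), Aux15.VF_card k]
end

section
/- Let d = 2 and Q_1 = [0,1/5]^2 ∈ Q_1^(2)(F^(2)). Fix an integer m ≥ 1. For every interval Q̃ ∈ Q_{m+1}^(1)(G^(1) ∩ [0,1/5]) and every i ∈ {0, 1, ..., 5^m + 1}, the rectangle Q_{Q̃,i} := [(5^m − 1 + i)/5^{m+1}, (5^m + i)/5^{m+1}] × Q̃ belongs to Q_{m+1}^(2)(F^(2)); moreover Q_{Q̃,0} ∈ S^m({Q_1}) and Q_{Q̃,5^m+1} ∈ S^m(Γ(Q_1)^c). -/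
open Set MeasureTheory Filter
open scoped Classical

/-- The rectangle `Q_{Q̃,i} = [(5^m-1+i)/5^{m+1}, (5^m+i)/5^{m+1}] × Q̃`. -/
def rect2 (m i : ℕ) (Qt : Set (Pt 1)) : Set (Pt 2) :=
  {x | x 0 ∈ Icc ((5 ^ m - 1 + i : ℝ) / 5 ^ (m + 1)) ((5 ^ m + i : ℝ) / 5 ^ (m + 1)) ∧
    WithLp.toLp 2 (fun _ : Fin 1 => x 1) ∈ Qt}

/- ------------------- auxiliary lemmas ------------------- -/
noncomputable section

lemma eval_cont {d : ℕ} (i : Fin d) : Continuous fun x : Pt d => x i :=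
  (EuclideanSpace.proj i).continuous

lemma isClosed_cube {d n : ℕ} (l : Fin d → ℕ) : IsClosed (cube d n l) := by
  have h : cube d n l = ⋂ i, ((fun x : Pt d => x i) ⁻¹'
      Icc (((l i : ℝ) - 1) / 5 ^ n) ((l i : ℝ) / 5 ^ n)) := by
    ext x; simp [cube, forall_and]
  rw [h]
  exact isClosed_iInter fun i => IsClosed.preimage (eval_cont i) isClosed_Icc

lemma isOpen_box {d n : ℕ} (l : Fin d → ℕ) :
    IsOpen {x : Pt d | ∀ i, ((l i : ℝ) - 1) / 5 ^ n < x i ∧ x i < (l i : ℝ) / 5 ^ n} := by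
  have h : {x : Pt d | ∀ i, ((l i : ℝ) - 1) / 5 ^ n < x i ∧ x i < (l i : ℝ) / 5 ^ n}
      = ⋂ i, ((fun x : Pt d => x i) ⁻¹'
      Ioo (((l i : ℝ) - 1) / 5 ^ n) ((l i : ℝ) / 5 ^ n)) := by
    ext x; simp [forall_and]
  rw [h]
  exact isOpen_iInter_of_finite fun i => IsOpen.preimage (eval_cont i) isOpen_Ioo

lemma box_subset_interior {d n : ℕ} (l : Fin d → ℕ) :
    {x : Pt d | ∀ i, ((l i : ℝ) - 1) / 5 ^ n < x i ∧ x i < (l i : ℝ) / 5 ^ n}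
      ⊆ interior (cube d n l) :=
  interior_maximal (fun x hx i => ⟨(hx i).1.le, (hx i).2.le⟩) (isOpen_box l)

lemma interior_cube_strict {d n : ℕ} {l : Fin d → ℕ} {x : Pt d}
    (hx : x ∈ interior (cube d n l)) (i : Fin d) :
    ((l i : ℝ) - 1) / 5 ^ n < x i ∧ x i < (l i : ℝ) / 5 ^ n := by
  rw [mem_interior_iff_mem_nhds, Metric.mem_nhds_iff] at hx
  obtain ⟨ε, hε, hball⟩ := hx
  have hmem := hball (Metric.mem_ball_self hε) i
  constructor
  · rcases lt_or_eq_of_le hmem.1 with h | h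
    · exact h
    · exfalso
      have hx' : x - (ε/2) • EuclideanSpace.single i (1:ℝ) ∈ Metric.ball x ε := by
        rw [Metric.mem_ball, dist_eq_norm]
        simp only [sub_sub_cancel_left, norm_neg]
        rw [norm_smul, EuclideanSpace.norm_single]
        simp only [norm_one, mul_one, Real.norm_eq_abs]
        rw [abs_of_pos (by linarith)]; linarith
      have h2 := (hball hx' i).1
      have heval : (x - (ε/2) • EuclideanSpace.single i (1:ℝ)) i = x i - ε/2 := by
        simp [EuclideanSpace.single_apply]
      rw [heval, ← h] at h2; linarith
  · rcases lt_or_eq_of_le hmem.2 with h | h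
    · exact h
    · exfalso
      have hx' : x + (ε/2) • EuclideanSpace.single i (1:ℝ) ∈ Metric.ball x ε := by
        rw [Metric.mem_ball, dist_eq_norm]
        simp only [add_sub_cancel_left]
        rw [norm_smul, EuclideanSpace.norm_single]
        simp only [norm_one, mul_one, Real.norm_eq_abs]
        rw [abs_of_pos (by linarith)]; linarith
      have h2 := (hball hx' i).2
      have heval : (x + (ε/2) • EuclideanSpace.single i (1:ℝ)) i = x i + ε/2 := by
        simp [EuclideanSpace.single_apply]
      rw [heval, h] at h2; linarith

lemma funext_fin1 (y : Pt 1) : (fun _ : Fin 1 => y 0) = y :=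
  funext fun i => by rw [Subsingleton.elim i 0]

def mk2 (a b : ℝ) : Pt 2 := (WithLp.equiv 2 (Fin 2 → ℝ)).symm ![a, b]

lemma mk2_zero (a b : ℝ) : mk2 a b 0 = a := rfl
lemma mk2_one (a b : ℝ) : mk2 a b 1 = b := rfl

/-- membership in `F1 2` for points whose second coordinate avoids the middle bands. -/
lemma mem_F1_two {x : Pt 2} (h0 : x 0 ∈ Icc (0:ℝ) 1)
    (h1 : x 1 ∈ Icc (0:ℝ) (1/5) ∪ Icc (4/5:ℝ) 1) : x ∈ F1 2 := by
  have hx1 : x 1 ∈ Icc (0:ℝ) 1 := by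
    rcases h1 with h | h
    · exact ⟨h.1, by linarith [h.2]⟩
    · exact ⟨by linarith [h.1], h.2⟩
  constructor
  · simp only [F0, Set.mem_setOf_eq, Fin.forall_fin_two]
    exact ⟨h0, hx1⟩
  · intro hx
    simp only [Set.mem_iUnion, Set.mem_setOf_eq, Fin.exists_fin_two] at hx
    have hnot : x 1 ∉ Ioo (2/5:ℝ) (3/5) ∧ x 1 ∉ Ioo (1/5:ℝ) (2/5) ∪ Ioo (3/5:ℝ) (4/5) := by
      rcases h1 with h | h <;>
        constructor <;> simp only [Set.mem_Ioo, Set.mem_union, not_or, not_and_or, not_lt] <;>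
        [ (left; linarith [h.2]);
          (constructor <;> left <;> linarith [h.2]);
          (right; linarith [h.1]);
          (constructor <;> right <;> linarith [h.1]) ]
    rcases hx with ⟨-, -, h3⟩ | ⟨-, h2, -⟩
    · exact hnot.1 (h3 1 (by decide))
    · exact hnot.2 h2

/-- `F0 1` is closed. -/
lemma isClosed_F0 (d : ℕ) : IsClosed (F0 d) := by
  have h : F0 d = ⋂ i, ((fun x : Pt d => x i) ⁻¹' Icc (0:ℝ) 1) := by
    ext x; simp [F0]
  rw [h]
  exact isClosed_iInter fun i => IsClosed.preimage (eval_cont i) isClosed_Icc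

lemma frontier_F0_one {z : Pt 1} (hz : z ∈ frontier (F0 1)) : z 0 = 0 ∨ z 0 = 1 := by
  have h1 : z ∈ F0 1 := (isClosed_F0 1).closure_eq ▸ hz.1
  have h2 : z ∉ interior (F0 1) := hz.2
  have hbox : {x : Pt 1 | 0 < x 0 ∧ x 0 < 1} ⊆ interior (F0 1) := by
    apply interior_maximal
    · intro x hx i
      rw [Subsingleton.elim i 0]
      exact ⟨hx.1.le, hx.2.le⟩
    · have h : {x : Pt 1 | 0 < x 0 ∧ x 0 < 1} = (fun x : Pt 1 => x 0) ⁻¹' Ioo (0:ℝ) 1 := rfl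
      rw [h]; exact IsOpen.preimage (eval_cont 0) isOpen_Ioo
  have := h1 0
  by_contra hc
  push_neg at hc
  exact h2 (hbox ⟨lt_of_le_of_ne this.1 (Ne.symm hc.1), lt_of_le_of_ne this.2 hc.2⟩)

/-- points of `G1 1` lie in `[0,1/5] ∪ [4/5,1]`. -/
lemma G1_one_mem {y : Pt 1} (hy : y ∈ G1 1) :
    y 0 ∈ Icc (0:ℝ) (1/5) ∪ Icc (4/5:ℝ) 1 := by
  simp only [G1, Set.mem_iUnion, Set.mem_setOf_eq, exists_prop] at hy
  obtain ⟨Q, ⟨⟨⟨l, hl, rfl⟩, hint⟩, hfr⟩, hyQ⟩ := hy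
  have hl0 := hl 0
  norm_num at hl0
  have hy0 := hyQ 0
  norm_num at hy0
  have hcases : l 0 = 1 ∨ l 0 = 2 ∨ l 0 = 3 ∨ l 0 = 4 ∨ l 0 = 5 := by omega
  have vac1 : ∀ (z : Pt 1) (j : Fin 1), ¬ j < (0 : Fin 1) := by
    intro z j hj; rw [Subsingleton.elim j 0] at hj; exact lt_irrefl _ hj
  rcases hcases with h | h | h | h | h
  · left
    rw [h] at hy0; norm_num at hy0
    exact ⟨by linarith [hy0.1], hy0.2⟩
  · exfalso
    obtain ⟨z, hzi, hzF⟩ := hint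
    have hs := interior_cube_strict hzi 0
    rw [h] at hs; norm_num at hs
    obtain ⟨-, hz2⟩ := hzF
    apply hz2
    simp only [Set.mem_iUnion, Set.mem_setOf_eq]
    refine ⟨0, fun j hj => absurd hj (vac1 z j), Or.inl ⟨hs.1, hs.2⟩, fun j hj => ?_⟩
    · exact absurd hj (by rw [Subsingleton.elim j 0]; exact lt_irrefl _)
  · exfalso
    obtain ⟨z, hz1, hz2⟩ := hfr
    have hz0 := hz1 0
    rw [h] at hz0; norm_num at hz0
    rcases frontier_F0_one hz2 with h' | h' <;> rw [h'] at hz0 <;>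
      [linarith [hz0.1]; linarith [hz0.2]]
  · exfalso
    obtain ⟨z, hzi, hzF⟩ := hint
    have hs := interior_cube_strict hzi 0
    rw [h] at hs; norm_num at hs
    obtain ⟨-, hz2⟩ := hzF
    apply hz2
    simp only [Set.mem_iUnion, Set.mem_setOf_eq]
    refine ⟨0, fun j hj => absurd hj (vac1 z j), Or.inr ⟨hs.1, hs.2⟩, fun j hj => ?_⟩
    · exact absurd hj (by rw [Subsingleton.elim j 0]; exact lt_irrefl _)
  · right
    rw [h] at hy0; norm_num at hy0
    exact ⟨hy0.1, hy0.2⟩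

lemma exists_k {t : ℝ} (h : t ∈ Icc (0:ℝ) 1) :
    ∃ k : ℕ, 1 ≤ k ∧ k ≤ 5 ∧ ((k:ℝ)-1)/5 ≤ t ∧ t ≤ (k:ℝ)/5 := by
  obtain ⟨h0, h1⟩ := h
  by_cases c1 : t ≤ 1/5
  · exact ⟨1, by norm_num, by norm_num, by norm_num; linarith, by norm_num; linarith⟩
  by_cases c2 : t ≤ 2/5
  · exact ⟨2, by norm_num, by norm_num, by norm_num; linarith, by norm_num; linarith⟩
  by_cases c3 : t ≤ 3/5
  · exact ⟨3, by norm_num, by norm_num, by norm_num; linarith, by norm_num; linarith⟩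
  by_cases c4 : t ≤ 4/5
  · exact ⟨4, by norm_num, by norm_num, by norm_num; linarith, by norm_num; linarith⟩
  · exact ⟨5, by norm_num, by norm_num, by norm_num; linarith, by norm_num; linarith⟩

/-- The main structural lemma: points above a `Gn`-point lie in `Fn`. -/
lemma key : ∀ n (x : Pt 2), x 0 ∈ Icc (0:ℝ) 1 →
    (∃ y : Pt 1, y ∈ Gn 1 n ∧ y 0 = x 1) → x ∈ Fn 2 n
  | 0, x, h0, ⟨y, hy, hxy⟩ => by
      have h1 : x 1 ∈ Icc (0:ℝ) 1 := by
        rw [← hxy]; exact (show y ∈ F0 1 from hy) 0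
      show x ∈ F0 2
      simp only [F0, Set.mem_setOf_eq, Fin.forall_fin_two]
      exact ⟨h0, h1⟩
  | 1, x, h0, ⟨y, hy, hxy⟩ =>
      mem_F1_two h0 (hxy ▸ G1_one_mem hy)
  | (n+2), x, h0, ⟨y, hy, hxy⟩ => by
      simp only [Gn, Set.mem_iUnion, Set.mem_setOf_eq, exists_prop, Set.mem_image] at hy
      obtain ⟨l, ⟨-, hintG⟩, y', hy', hpsiy⟩ := hy
      obtain ⟨t, htInt, htG⟩ := hintG
      have hts := interior_cube_strict htInt 0
      have htm := G1_one_mem htG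
      have hl01 : l 0 = 1 ∨ l 0 = 5 := by
        norm_num at hts
        rcases htm with h | h
        · left
          have h1 : (l 0 : ℝ) < 2 := by linarith [hts.1, h.2]
          have h2 : (0:ℝ) < (l 0 : ℝ) := by linarith [hts.2, h.1]
          have h1' : l 0 < 2 := by exact_mod_cast h1
          have h2' : 0 < l 0 := by exact_mod_cast h2
          omega
        · right
          have hub : t 0 ≤ 1 := by linarith [h.2]
          have h1 : (4:ℝ) < (l 0 : ℝ) := by linarith [hts.2, h.1]
          have h2 : (l 0 : ℝ) < 6 := by linarith [hts.1, hub]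
          have h1' : 4 < l 0 := by exact_mod_cast h1
          have h2' : l 0 < 6 := by exact_mod_cast h2
          omega
      have hl0' : (1:ℝ) ≤ (l 0 : ℝ) ∧ (l 0 : ℝ) ≤ 5 := by
        rcases hl01 with h | h <;> rw [h] <;> norm_num
      obtain ⟨k, hk1, hk5, hkl, hkr⟩ := exists_k h0
      have hk1' : (1:ℝ) ≤ (k:ℝ) := by exact_mod_cast hk1
      have hk5' : (k:ℝ) ≤ 5 := by exact_mod_cast hk5
      set x'' : Pt 2 := mk2 (5 * x 0 - ((k:ℝ) - 1)) (y' 0) with hx''def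
      have hx''0 : x'' 0 ∈ Icc (0:ℝ) 1 := by
        rw [hx''def, mk2_zero]
        constructor <;> [linarith [hkl]; linarith [hkr]]
      have hrec : x'' ∈ Fn 2 (n+1) :=
        key (n+1) x'' hx''0 ⟨y', hy', by rw [hx''def, mk2_one]⟩
      have hx1 : x 1 = ((l 0:ℝ) - 1)/5^1 + y' 0/5^1 := by rw [← hxy, ← hpsiy]; rfl
      simp only [Fn, Set.mem_iUnion, Set.mem_setOf_eq, exists_prop, Set.mem_image]
      refine ⟨![k, l 0], ⟨⟨![k, l 0], ?_, rfl⟩, ?_⟩, x'', hrec, ?_⟩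
      · intro j
        fin_cases j <;> simp <;> omega
      · refine ⟨mk2 ((2*(k:ℝ)-1)/10) ((2*(l 0:ℝ)-1)/10), box_subset_interior _ ?_, ?_⟩
        · simp only [Set.mem_setOf_eq, Fin.forall_fin_two, mk2_zero, mk2_one,
            Matrix.cons_val_zero, Matrix.cons_val_one, Matrix.head_cons, pow_one]
          refine ⟨⟨?_, ?_⟩, ?_, ?_⟩ <;> linarith [hl0'.1, hl0'.2]
        · apply mem_F1_two
          · rw [mk2_zero]; constructor <;> [linarith; linarith]
          · rw [mk2_one]
            rcases hl01 with h | h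
            · left; rw [h]; norm_num
            · right; rw [h]; norm_num
      · have e0 : psi 2 1 ![k, l 0] x'' 0 = x 0 := by
          show ((((![k, l 0] 0 : ℕ) : ℝ) - 1) / 5 ^ 1 + x'' 0 / 5 ^ 1) = x 0
          rw [hx''def, mk2_zero]
          simp only [Matrix.cons_val_zero, pow_one]
          ring
        have e1 : psi 2 1 ![k, l 0] x'' 1 = x 1 := by
          show ((((![k, l 0] 1 : ℕ) : ℝ) - 1) / 5 ^ 1 + x'' 1 / 5 ^ 1) = x 1
          rw [hx''def, mk2_one]
          simp only [Matrix.cons_val_one, Matrix.head_cons, Matrix.cons_val_zero]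
          rw [hx1]
        ext j
        fin_cases j
        · exact e0
        · exact e1

lemma mem_Fset {x : Pt 2} (h0 : x 0 ∈ Icc (0:ℝ) 1) (y : Pt 1) (hy : y ∈ Gset 1)
    (hxy : y 0 = x 1) : x ∈ Fset 2 := by
  obtain ⟨hyF0, hyG⟩ := hy
  simp only [Set.mem_iInter] at hyG
  rw [Fset, Set.mem_iInter]
  intro n
  cases n with
  | zero => exact key 0 x h0 ⟨y, hyF0, hxy⟩
  | succ n => exact key (n+1) x h0 ⟨y, hyG (n+1) (Nat.succ_le_succ (Nat.zero_le n)), hxy⟩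

lemma rect2_eq (m i : ℕ) (l : Fin 1 → ℕ) :
    rect2 m i (cube 1 (m+1) l)
      = cube 2 (m+1) ![5 ^ m + i, l 0] := by
  have h5 : (0:ℝ) < 5 ^ (m+1) := by positivity
  ext x
  simp only [rect2, cube, Set.mem_setOf_eq, Set.mem_Icc, Fin.forall_fin_two,
    Matrix.cons_val_zero, Matrix.cons_val_one, Matrix.head_cons]
  constructor
  · rintro ⟨⟨ha, hb⟩, hc⟩
    have hc0 := hc 0
    refine ⟨⟨?_, ?_⟩, hc0.1, hc0.2⟩
    · push_cast
      ring_nf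
      ring_nf at ha
      linarith
    · push_cast
      ring_nf
      ring_nf at hb
      linarith
  · rintro ⟨⟨ha, hb⟩, hc, hd⟩
    refine ⟨⟨?_, ?_⟩, fun j => ?_⟩
    · push_cast at ha ⊢
      ring_nf
      ring_nf at ha
      linarith
    · push_cast at hb ⊢
      ring_nf
      ring_nf at hb
      linarith
    · rw [Subsingleton.elim j 0]
      exact ⟨hc, hd⟩

set_option maxHeartbeats 2000000 in

/-- The chain of rectangles `Q_{Q̃,i}`, `0 ≤ i ≤ 5^m + 1`, over an interval
`Q̃ ∈ 𝒬_{m+1}⁽¹⁾(G⁽¹⁾ ∩ [0,1/5])` consists of level-`(m+1)` cells of `F⁽²⁾`, starting in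
`Sᵐ({Q₁})` and ending in `Sᵐ(Γ(Q₁)ᶜ)`, where `Q₁ = [0,1/5]²`. -/
theorem statement16 (m : ℕ) (hm : 1 ≤ m) (Qt : Set (Pt 1))
    (hQt : Qt ∈ QcolOf 1 (m + 1) (Gset 1 ∩ Qone 1)) :
    (∀ i ≤ 5 ^ m + 1, rect2 m i Qt ∈ QcolOf 2 (m + 1) (Fset 2)) ∧
    rect2 m 0 Qt ∈ Sm 2 1 m {Qone 2} ∧
    rect2 m (5 ^ m + 1) Qt ∈ Sm 2 1 m (GamC 2 1 (Qone 2)) := by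
  obtain ⟨⟨l, hl, rfl⟩, y, hyInt, hyG, hyQ1⟩ := hQt
  have h5 : (0:ℝ) < 5 ^ (m+1) := by positivity
  have h5m : (0:ℝ) < 5 ^ m := by positivity
  have hps : (5:ℝ) ^ (m+1) = 5 ^ m * 5 := pow_succ 5 m
  have hn1 : 1 ≤ 5 ^ m := Nat.one_le_pow _ _ (by norm_num)
  have h1m : (1:ℝ) ≤ 5 ^ m := by exact_mod_cast hn1
  have hstr := interior_cube_strict hyInt 0
  have hl0 := hl 0
  have hl0r : (1:ℝ) ≤ (l 0 : ℝ) := by exact_mod_cast hl0.1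
  have hy15 : y 0 ≤ 1/5 := (hyQ1 0).2
  have hl0m : l 0 ≤ 5 ^ m := by
    have h' : (l 0 : ℝ) < (5:ℝ)^m + 1 := by
      have h2 := hstr.1
      rw [div_lt_iff₀ h5] at h2
      nlinarith [hy15, h5]
    have h'' : l 0 < 5^m + 1 := by exact_mod_cast (by push_cast; exact h' : (l 0:ℝ) < ((5^m + 1 : ℕ):ℝ))
    omega
  have hl0mr : (l 0 : ℝ) ≤ 5 ^ m := by exact_mod_cast
    (by push_cast; exact_mod_cast hl0m : ((l 0 : ℕ):ℝ) ≤ ((5^m : ℕ):ℝ))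
  have hypos : 0 < y 0 := by
    have h0' : (0:ℝ) ≤ ((l 0:ℝ) - 1)/5^(m+1) := div_nonneg (by linarith) h5.le
    linarith [hstr.1]
  have hyub : y 0 < 1/5 := by
    have hdle : ((l 0:ℝ))/5^(m+1) ≤ 1/5 := by
      rw [div_le_div_iff₀ h5 (by norm_num : (0:ℝ) < 5)]
      nlinarith
    linarith [hstr.2]
  have hQtsub : ∀ z : ℝ, ((l 0:ℝ)-1)/5^(m+1) ≤ z → z ≤ (l 0:ℝ)/5^(m+1) →
      0 ≤ z ∧ z ≤ 1/5 := by
    intro z hz1 hz2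
    have h0' : (0:ℝ) ≤ ((l 0:ℝ) - 1)/5^(m+1) := div_nonneg (by linarith) h5.le
    have hdle : ((l 0:ℝ))/5^(m+1) ≤ 1/5 := by
      rw [div_le_div_iff₀ h5 (by norm_num : (0:ℝ) < 5)]
      nlinarith
    exact ⟨by linarith, by linarith⟩
  have part1 : ∀ i ≤ 5 ^ m + 1, rect2 m i (cube 1 (m+1) l) ∈ QcolOf 2 (m + 1) (Fset 2) := by
    intro i hi
    have hir : (i:ℝ) ≤ (5:ℝ)^m + 1 := by
      exact_mod_cast (by exact_mod_cast hi : ((i:ℕ):ℝ) ≤ ((5^m + 1 : ℕ):ℝ))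
    have hl05 : l 0 ≤ 5^m * 5 := le_trans hl0.2 (le_of_eq (pow_succ 5 m))
    constructor
    · refine ⟨![5^m + i, l 0], ?_, rect2_eq m i l⟩
      have hb0 : 1 ≤ 5^m + i ∧ 5^m + i ≤ 5^(m+1) := by
        rw [pow_succ]; omega
      intro j
      fin_cases j
      · exact hb0
      · exact hl0
    · refine ⟨mk2 (((5:ℝ)^m + i - 1/2)/5^(m+1)) (y 0), ?_, ?_⟩
      · rw [rect2_eq m i l]
        apply box_subset_interior
        simp only [Set.mem_setOf_eq, Fin.forall_fin_two, mk2_zero, mk2_one,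
          Matrix.cons_val_zero, Matrix.cons_val_one, Matrix.head_cons]
        refine ⟨⟨?_, ?_⟩, hstr.1, hstr.2⟩
        · rw [div_lt_div_iff₀ h5 h5]
          push_cast
          nlinarith [h5]
        · rw [div_lt_div_iff₀ h5 h5]
          push_cast
          nlinarith [h5]
      · refine mem_Fset ?_ y hyG (by rw [mk2_one])
        rw [mk2_zero]
        constructor
        · apply div_nonneg _ h5.le
          linarith
        · rw [div_le_one h5]
          nlinarith
  refine ⟨part1, ⟨?_, ?_⟩, ⟨?_, ?_⟩⟩
  · rw [Nat.add_comm 1 m]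
    exact part1 0 (Nat.zero_le _)
  · refine ⟨Qone 2, Set.mem_singleton _, ?_⟩
    rintro x ⟨⟨hxa, hxb⟩, hx1⟩
    have hx10 := hx1 0
    have h15 : (5:ℝ)^m / 5^(m+1) = 1/5 := by
      rw [hps]; field_simp
    simp only [Qone, Set.mem_setOf_eq, Fin.forall_fin_two]
    constructor
    · constructor
      · have h0' : (0:ℝ) ≤ ((5:ℝ)^m - 1 + (0:ℕ))/5^(m+1) := by
          push_cast
          apply div_nonneg _ h5.le
          linarith
        exact le_trans h0' hxa
      · have : ((5:ℝ)^m + (0:ℕ))/5^(m+1) = 1/5 := by push_cast; rw [add_zero, h15]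
        rw [← this]
        exact hxb
    · exact hQtsub (x 1) hx10.1 hx10.2
  · rw [Nat.add_comm 1 m]
    exact part1 (5^m + 1) le_rfl
  · refine ⟨cube 2 1 ![3, 1], ⟨⟨⟨![3, 1], ?_, rfl⟩, ?_⟩, ?_⟩, ?_⟩
    · intro j
      fin_cases j <;> simp
    · refine ⟨mk2 (1/2) (y 0), box_subset_interior _ ?_, ?_⟩
      · simp only [Set.mem_setOf_eq, Fin.forall_fin_two, mk2_zero, mk2_one,
          Matrix.cons_val_zero, Matrix.cons_val_one, Matrix.head_cons, pow_one]
        norm_num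
        exact ⟨hypos, hyub⟩
      · refine mem_Fset ?_ y hyG (by rw [mk2_one])
        rw [mk2_zero]
        constructor <;> norm_num
    · rintro ⟨-, z, hz1, hz2⟩
      have h1' := hz1 0
      have h2' := (hz2 0).2
      simp only [Matrix.cons_val_zero, pow_one] at h1'
      norm_num at h1'
      linarith [h1'.1]
    · rintro x ⟨⟨hxa, hxb⟩, hx1⟩
      have hx10 := hx1 0
      have hsub1 := hQtsub (x 1) hx10.1 hx10.2
      push_cast at hxa hxb
      have hlow : (2:ℝ)/5 ≤ x 0 := by
        have he : ((5:ℝ)^m - 1 + (5^m + 1))/5^(m+1) = 2/5 := by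
          rw [hps]; field_simp; ring
        rw [← he]; exact hxa
      have hup : x 0 ≤ (3:ℝ)/5 := by
        have he : ((5:ℝ)^m + (5^m + 1))/5^(m+1) ≤ 3/5 := by
          rw [hps, div_le_div_iff₀ (by positivity) (by norm_num : (0:ℝ) < 5)]
          nlinarith
        linarith
      simp only [cube, Set.mem_setOf_eq, Fin.forall_fin_two, Matrix.cons_val_zero,
        Matrix.cons_val_one, Matrix.head_cons, pow_one]
      constructor
      · constructor <;> norm_num <;> linarith
      · constructor <;> norm_num <;> linarith [hsub1.1, hsub1.2]
end
end

section
/- Let d = 3 and Q_1 = [0,1/5]^3 ∈ Q_1^(3)(F^(3)). Fix an integer m ≥ 1. For every square Q̃ ∈ Q_{m+1}^(2)(G^(2) ∩ [0,1/5]^2) and every i ∈ {0, 1, ..., 5^m + 1}, the box Q_{Q̃,i} := [(5^m − 1 + i)/5^{m+1}, (5^m + i)/5^{m+1}] × Q̃ belongs to Q_{m+1}^(3)(F^(3)); moreover Q_{Q̃,0} ∈ S^m({Q_1}) and Q_{Q̃,5^m+1} ∈ S^m(Γ(Q_1)^c). -/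
open Set MeasureTheory Filter
open scoped Classical

/-- The box `Q_{Q̃,i} = [(5^m-1+i)/5^{m+1}, (5^m+i)/5^{m+1}] × Q̃`. -/
def rect3 (m i : ℕ) (Qt : Set (Pt 2)) : Set (Pt 3) :=
  {x | x 0 ∈ Icc ((5 ^ m - 1 + i : ℝ) / 5 ^ (m + 1)) ((5 ^ m + i : ℝ) / 5 ^ (m + 1)) ∧
    (WithLp.toLp 2 (fun j : Fin 2 => x j.succ) : Pt 2) ∈ Qt}

section AuxiliaryLemmas

open Set

lemma aux_mem_univ_pi {d : ℕ} (s : Fin d → Set ℝ) (x : Pt d) :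
    x ∈ WithLp.ofLp ⁻¹' Set.univ.pi s ↔ ∀ i, x i ∈ s i := Set.mem_univ_pi

lemma aux_interior_preimage {d : ℕ} (s : Set (Fin d → ℝ)) :
    interior (WithLp.ofLp ⁻¹' s : Set (Pt d)) = WithLp.ofLp ⁻¹' interior s :=
  ((PiLp.homeomorph 2 (fun _ : Fin d => ℝ)).preimage_interior s).symm

lemma aux_cube_eq_pi (d n : ℕ) (l : Fin d → ℕ) :
    cube d n l = WithLp.ofLp ⁻¹' Set.univ.pi fun i => Icc (((l i:ℝ)-1)/5^n) ((l i:ℝ)/5^n) := by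
  ext x
  rw [aux_mem_univ_pi]
  simp only [cube, Set.mem_setOf_eq, mem_Icc]

lemma aux_mem_interior_cube {d n : ℕ} {l : Fin d → ℕ} {x : Pt d} :
    x ∈ interior (cube d n l) ↔
      ∀ i, ((l i:ℝ)-1)/5^n < x i ∧ x i < (l i:ℝ)/5^n := by
  rw [aux_cube_eq_pi, aux_interior_preimage, interior_pi_set Set.finite_univ, aux_mem_univ_pi]
  simp only [interior_Icc, mem_Ioo]

lemma aux_F0_eq_pi (d : ℕ) : F0 d = WithLp.ofLp ⁻¹' Set.univ.pi fun _ : Fin d => Icc (0:ℝ) 1 := by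
  ext x
  rw [aux_mem_univ_pi]
  simp only [F0, Set.mem_setOf_eq]

lemma aux_frontier_F0 {d : ℕ} {p : Pt d} (hp : p ∈ frontier (F0 d)) :
    p ∈ F0 d ∧ ∃ j, p j ≤ 0 ∨ 1 ≤ p j := by
  have hcl : IsClosed (F0 d) := by
    rw [aux_F0_eq_pi]; exact (isClosed_set_pi fun i _ => isClosed_Icc).preimage (PiLp.continuous_ofLp 2 _)
  rw [frontier, hcl.closure_eq] at hp
  refine ⟨hp.1, ?_⟩
  have h2 := hp.2
  rw [aux_F0_eq_pi, aux_interior_preimage, interior_pi_set Set.finite_univ, aux_mem_univ_pi] at h2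
  simp only [interior_Icc, mem_Ioo, not_forall] at h2
  obtain ⟨j, hj⟩ := h2
  exact ⟨j, by by_contra h; push_neg at h; exact hj ⟨h.1, h.2⟩⟩

lemma aux_mem_F1_of_edge {d : ℕ} (x : Pt d) (hx : x ∈ F0 d) (j : Fin d)
    (hj : x j ≤ 1/5 ∨ 4/5 ≤ x j) : x ∈ F1 d := by
  refine ⟨hx, ?_⟩
  intro hmem
  simp only [Set.mem_iUnion, Set.mem_setOf_eq] at hmem
  obtain ⟨i, h1, h2, h3⟩ := hmem
  have hji : (1:ℝ)/5 < x j ∧ x j < 4/5 := by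
    rcases lt_trichotomy j i with h|h|h
    · have := h1 j h; exact ⟨by linarith [this.1], by linarith [this.2]⟩
    · subst h; rcases h2 with h|h
      · exact ⟨h.1, by linarith [h.2]⟩
      · exact ⟨by linarith [h.1], h.2⟩
    · have := h3 j h; exact ⟨by linarith [this.1], by linarith [this.2]⟩
  rcases hj with h|h <;> linarith [hji.1, hji.2]

lemma aux_cube_subset_F0 {d n : ℕ} {l : Fin d → ℕ} (hb : ∀ i, 1 ≤ l i ∧ l i ≤ 5 ^ n) :
    cube d n l ⊆ F0 d := by
  intro x hx i
  have h := hx i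
  have h1 : (1:ℝ) ≤ l i := by exact_mod_cast (hb i).1
  have h2 : (l i:ℝ) ≤ 5^n := by exact_mod_cast (hb i).2
  have h5 : (0:ℝ) < 5^n := by positivity
  constructor
  · have : (0:ℝ) ≤ ((l i:ℝ)-1)/5^n := div_nonneg (by linarith) h5.le
    linarith [h.1]
  · have : (l i:ℝ)/5^n ≤ 1 := by
      rw [div_le_one h5]; exact h2
    linarith [h.2]

/-- Structure of points of `G1 2`: they lie in `[0,1]²` and have a coordinate in
`[0,1/5] ∪ [4/5,1]`. -/
lemma aux_mem_G1 {x : Pt 2} (hx : x ∈ G1 2) :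
    x ∈ F0 2 ∧ ∃ j : Fin 2, x j ≤ 1/5 ∨ 4/5 ≤ x j := by
  simp only [G1, Set.mem_iUnion, Set.mem_setOf_eq] at hx
  obtain ⟨Q, ⟨⟨⟨l, hb, rfl⟩, -⟩, p, hpQ, hpf⟩, hxQ⟩ := hx
  obtain ⟨hpF0, j, hj⟩ := aux_frontier_F0 hpf
  refine ⟨aux_cube_subset_F0 hb hxQ, j, ?_⟩
  have hb1 : (1:ℝ) ≤ l j := by exact_mod_cast (hb j).1
  have hb5 : (l j:ℝ) ≤ 5 := by exact_mod_cast (hb j).2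
  have hQ1 := (hpQ j).1
  have hQ2 := (hpQ j).2
  simp only [pow_one] at hQ1 hQ2
  rcases hj with h|h
  · -- p j ≤ 0, so l j = 1
    have hlj : (l j:ℝ) ≤ 1 := by
      have : ((l j:ℝ)-1)/5 ≤ 0 := le_trans hQ1 h
      nlinarith
    left
    have := (hxQ j).2
    simp only [pow_one] at this
    calc x j ≤ (l j:ℝ)/5 := this
      _ ≤ 1/5 := by linarith
  · -- 1 ≤ p j, so l j = 5
    have hlj : (5:ℝ) ≤ l j := by
      have : (1:ℝ) ≤ (l j:ℝ)/5 := le_trans h hQ2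
      nlinarith
    right
    have := (hxQ j).1
    simp only [pow_one] at this
    calc (4:ℝ)/5 ≤ ((l j:ℝ)-1)/5 := by linarith
      _ ≤ x j := this

/-- Index structure of a level-1 square meeting `G1 2` in its interior. -/
lemma aux_step_index {l' : Fin 2 → ℕ} (h : cube 2 1 l' ∈ QcolOf 2 1 (G1 2)) :
    (∀ i, 1 ≤ l' i ∧ l' i ≤ 5) ∧ ∃ j, l' j = 1 ∨ l' j = 5 := by
  obtain ⟨-, p, hpint, hpG⟩ := h
  have hpi := aux_mem_interior_cube.mp hpint
  obtain ⟨hpF0, j, hj⟩ := aux_mem_G1 hpG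
  simp only [pow_one] at hpi
  have hbnd : ∀ i, 1 ≤ l' i ∧ l' i ≤ 5 := by
    intro i
    have h0 := (hpF0 i).1
    have h1 := (hpF0 i).2
    have hlt1 := (hpi i).1
    have hlt2 := (hpi i).2
    constructor
    · have : (0:ℝ) < (l' i:ℝ)/5 := lt_of_le_of_lt h0 hlt2
      have : (0:ℝ) < (l' i:ℝ) := by linarith
      exact_mod_cast Nat.pos_of_ne_zero (by intro hz; rw [hz] at this; simp at this)
    · have : ((l' i:ℝ)-1)/5 < 1 := lt_of_lt_of_le hlt1 h1
      have : (l' i:ℝ) < 6 := by linarith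
      have : l' i < 6 := by exact_mod_cast this
      omega
  refine ⟨hbnd, j, ?_⟩
  have hlt1 := (hpi j).1
  have hlt2 := (hpi j).2
  have hb1 := (hbnd j).1
  have hb5 := (hbnd j).2
  rcases hj with h|h
  · left
    have : ((l' j:ℝ)-1)/5 < 1/5 := lt_of_lt_of_le hlt1 h
    have : (l' j:ℝ) < 2 := by linarith
    have : l' j < 2 := by exact_mod_cast this
    omega
  · right
    have : (4:ℝ)/5 < (l' j:ℝ)/5 := lt_of_le_of_lt h hlt2
    have : (4:ℝ) < l' j := by linarith
    have : 4 < l' j := by exact_mod_cast this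
    omega

/-- A level-1 cube of `[0,1]³` whose base-square index touches the boundary frame is a
level-1 cube of `F₁³`. -/
lemma aux_center_cube {k : ℕ} {l' : Fin 2 → ℕ} (hk1 : 1 ≤ k) (hk5 : k ≤ 5)
    (hb : ∀ i, 1 ≤ l' i ∧ l' i ≤ 5) (hedge : ∃ j, l' j = 1 ∨ l' j = 5) :
    cube 3 1 (Fin.cons k l') ∈ QcolOf 3 1 (F1 3) := by
  have hbnd : ∀ i : Fin 3, 1 ≤ (Fin.cons k l' : Fin 3 → ℕ) i ∧ (Fin.cons k l' : Fin 3 → ℕ) i ≤ 5 := by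
    intro i
    refine Fin.cases ?_ ?_ i
    · simpa using ⟨hk1, hk5⟩
    · intro j; simpa using hb j
  refine ⟨⟨Fin.cons k l', hbnd, rfl⟩, ?_⟩
  set c : Pt 3 := WithLp.toLp 2 (fun i => (2*((Fin.cons k l' : Fin 3 → ℕ) i : ℝ) - 1)/10) with hc
  refine ⟨c, ?_, ?_⟩
  · rw [aux_mem_interior_cube]
    intro i
    simp only [pow_one, hc, PiLp.toLp_apply]
    constructor <;> [linarith; linarith]
  · refine aux_mem_F1_of_edge c ?_ ?_ ?_
    · intro i
      have h1 : (1:ℝ) ≤ (Fin.cons k l' : Fin 3 → ℕ) i := by exact_mod_cast (hbnd i).1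
      have h2 : ((Fin.cons k l' : Fin 3 → ℕ) i : ℝ) ≤ 5 := by exact_mod_cast (hbnd i).2
      simp only [hc, PiLp.toLp_apply]
      constructor <;> [linarith; linarith]
    · exact (Classical.choose hedge).succ
    · set j := Classical.choose hedge with hjdef
      have hj := Classical.choose_spec hedge
      have hcj : c j.succ = (2*(l' j : ℝ) - 1)/10 := by
        simp only [hc, PiLp.toLp_apply]
        norm_num [Fin.cons_succ]
      rcases hj with h|h
      · left; rw [hcj, h]; norm_num
      · right; rw [hcj, h]; norm_num

/-- Key induction: over points of `Gₙ⁽²⁾`, the whole segment `[0,1]` lies in `Fₙ⁽³⁾`. -/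
lemma aux_cons_mem_Fn (n : ℕ) : ∀ t : ℝ, t ∈ Icc (0:ℝ) 1 → ∀ x : Pt 2, x ∈ Gn 2 (n+1) →
    (WithLp.toLp 2 (Fin.cons t x.ofLp) : Pt 3) ∈ Fn 3 (n+1) := by
  induction n with
  | zero =>
    intro t ht x hx
    obtain ⟨hxF0, j, hj⟩ := aux_mem_G1 hx
    show (WithLp.toLp 2 (Fin.cons t x.ofLp) : Pt 3) ∈ F1 3
    refine aux_mem_F1_of_edge _ ?_ j.succ ?_
    · intro i
      refine Fin.cases ?_ ?_ i
      · simpa using ht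
      · intro j'; simpa using hxF0 j'
    · simpa using hj
  | succ n ih =>
    intro t ht x hx
    have hx' : x ∈ ⋃ l ∈ {l : Fin 2 → ℕ | cube 2 1 l ∈ QcolOf 2 1 (G1 2)},
        psi 2 1 l '' Gn 2 (n + 1) := hx
    simp only [Set.mem_iUnion, Set.mem_setOf_eq, Set.mem_image] at hx'
    obtain ⟨l', hl', y, hy, hxy⟩ := hx'
    obtain ⟨hb, hedge⟩ := aux_step_index hl'
    have h0 := ht.1
    have h1 := ht.2
    set k : ℕ := max 1 ⌈5*t⌉₊ with hkdef
    have hk1 : 1 ≤ k := le_max_left _ _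
    have hk5 : k ≤ 5 := max_le (by norm_num) (Nat.ceil_le.mpr (by push_cast; linarith))
    have hlow : (k:ℝ) - 1 ≤ 5*t := by
      rcases Nat.eq_zero_or_pos ⌈5*t⌉₊ with h|h
      · have : k = 1 := by omega
        rw [this]; push_cast; linarith
      · have hke : k = ⌈5*t⌉₊ := by omega
        have := Nat.ceil_lt_add_one (by linarith : (0:ℝ) ≤ 5*t)
        rw [hke]; linarith
    have hhigh : 5*t ≤ (k:ℝ) := by
      have h2 : (⌈5*t⌉₊:ℝ) ≤ (k:ℝ) := by exact_mod_cast le_max_right 1 ⌈5*t⌉₊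
      linarith [Nat.le_ceil (5*t)]
    set t' : ℝ := 5*t - ((k:ℝ)-1) with ht'def
    have ht' : t' ∈ Icc (0:ℝ) 1 := ⟨by simp only [ht'def]; linarith,
      by simp only [ht'def]; linarith⟩
    have heq : (WithLp.toLp 2 (Fin.cons t x.ofLp) : Pt 3) = psi 3 1 (Fin.cons k l') (WithLp.toLp 2 (Fin.cons t' y.ofLp)) := by
      refine WithLp.ofLp_injective 2 ?_
      funext i
      refine Fin.cases ?_ ?_ i
      · show t = _
        simp only [psi, WithLp.ofLp_toLp, Fin.cons_zero, pow_one, ht'def]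
        ring
      · intro j
        show x j = _
        rw [← hxy]
        simp only [psi, WithLp.ofLp_toLp, Fin.cons_succ, pow_one]
    show (WithLp.toLp 2 (Fin.cons t x.ofLp) : Pt 3) ∈ ⋃ l ∈ {l : Fin 3 → ℕ | cube 3 1 l ∈ QcolOf 3 1 (F1 3)},
        psi 3 1 l '' Fn 3 (n + 1)
    simp only [Set.mem_iUnion, Set.mem_setOf_eq, Set.mem_image]
    exact ⟨Fin.cons k l', aux_center_cube hk1 hk5 hb hedge,
      WithLp.toLp 2 (Fin.cons t' y.ofLp), ih t' ht' y hy, heq.symm⟩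

/-- Over points of `G⁽²⁾`, the whole segment `[0,1]` lies in `F⁽³⁾`. -/
lemma aux_cons_mem_Fset {t : ℝ} (ht : t ∈ Icc (0:ℝ) 1) {x : Pt 2} (hx : x ∈ Gset 2) :
    (WithLp.toLp 2 (Fin.cons t x.ofLp) : Pt 3) ∈ Fset 3 := by
  simp only [Fset, Set.mem_iInter]
  intro n
  cases n with
  | zero =>
    show (WithLp.toLp 2 (Fin.cons t x.ofLp) : Pt 3) ∈ F0 3
    intro i
    refine Fin.cases ?_ ?_ i
    · simpa using ht
    · intro j; simpa using hx.1 j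
  | succ n =>
    have hxG : x ∈ Gn 2 (n+1) := by
      have := hx.2
      simp only [Set.mem_iInter] at this
      exact this (n+1) (by omega)
    exact aux_cons_mem_Fn n t ht x hxG

end AuxiliaryLemmas

/-- The chain of boxes `Q_{Q̃,i}`, `0 ≤ i ≤ 5^m + 1`, over a square
`Q̃ ∈ 𝒬_{m+1}⁽²⁾(G⁽²⁾ ∩ [0,1/5]²)` consists of level-`(m+1)` cells of `F⁽³⁾`, starting in
`Sᵐ({Q₁})` and ending in `Sᵐ(Γ(Q₁)ᶜ)`, where `Q₁ = [0,1/5]³`. -/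
theorem statement17 (m : ℕ) (hm : 1 ≤ m) (Qt : Set (Pt 2))
    (hQt : Qt ∈ QcolOf 2 (m + 1) (Gset 2 ∩ Qone 2)) :
    (∀ i ≤ 5 ^ m + 1, rect3 m i Qt ∈ QcolOf 3 (m + 1) (Fset 3)) ∧
    rect3 m 0 Qt ∈ Sm 3 1 m {Qone 3} ∧
    rect3 m (5 ^ m + 1) Qt ∈ Sm 3 1 m (GamC 3 1 (Qone 3)) := by
  obtain ⟨⟨l, hlb, rfl⟩, p, hpint, hpmem⟩ := hQt
  have hpG : p ∈ Gset 2 := hpmem.1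
  have hpQ1 : p ∈ Qone 2 := hpmem.2
  have hpi := aux_mem_interior_cube.mp hpint
  have h5 : (0:ℝ) < 5^(m+1) := by positivity
  have h5m : (1:ℝ) ≤ 5^m := by exact_mod_cast Nat.one_le_pow m 5 (by norm_num)
  have hps : (5:ℝ)^(m+1) = 5*5^m := by rw [pow_succ]; ring
  have h5m0 : (5:ℝ)^m ≠ 0 := by positivity
  -- all indices of the base square are at most 5^m
  have hl5m : ∀ i, l i ≤ 5^m := by
    intro i
    have h1 := (hpi i).1
    have h2 := (hpQ1 i).2
    have h3 : ((l i:ℝ)-1)/5^(m+1) < 1/5 := lt_of_lt_of_le h1 h2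
    rw [div_lt_iff₀ h5] at h3
    have h4 : (l i:ℝ) < 5^m + 1 := by rw [hps] at h3; linarith
    have h5' : l i < 5^m + 1 := by exact_mod_cast h4
    omega
  have hl5mR : ∀ i, (l i:ℝ) ≤ 5^m := fun i => by exact_mod_cast hl5m i
  have hl1R : ∀ i, (1:ℝ) ≤ l i := fun i => by exact_mod_cast (hlb i).1
  have hp0 : ∀ i, 0 < p i := by
    intro i
    have := (hpi i).1
    have h0 : (0:ℝ) ≤ ((l i:ℝ)-1)/5^(m+1) := div_nonneg (by linarith [hl1R i]) h5.le
    linarith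
  have hp15 : ∀ i, p i < 1/5 := by
    intro i
    have h2 := (hpi i).2
    have h3 : (l i:ℝ)/5^(m+1) ≤ 1/5 := by
      rw [div_le_div_iff₀ h5 (by norm_num : (0:ℝ) < 5), hps]
      linarith [hl5mR i]
    linarith
  have hfifth : (5:ℝ)^m/5^(m+1) = 1/5 := by
    rw [hps, mul_comm, ← div_div, div_self h5m0]
  -- the rectangles are genuine level-(m+1) cubes
  have hrect : ∀ i : ℕ, rect3 m i (cube 2 (m+1) l)
      = cube 3 (m+1) (Fin.cons (5^m+i) l) := by
    intro i
    ext x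
    simp only [rect3, cube, Set.mem_setOf_eq, Set.mem_Icc]
    rw [Fin.forall_fin_succ (n := 2)]
    have e1 : (((5^m+i:ℕ)):ℝ) = 5^m + i := by push_cast; ring
    constructor
    · rintro ⟨⟨ha, hb⟩, h2⟩
      refine ⟨?_, fun j => ?_⟩
      · simp only [Fin.cons_zero, e1]
        have e2 : ((5:ℝ)^m + i - 1) = 5^m - 1 + i := by ring
        rw [e2]
        exact ⟨ha, hb⟩
      · simpa [Fin.cons_succ] using h2 j
    · rintro ⟨h0, h2⟩
      simp only [Fin.cons_zero, e1] at h0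
      have e2 : ((5:ℝ)^m + i - 1) = 5^m - 1 + i := by ring
      rw [e2] at h0
      refine ⟨⟨h0.1, h0.2⟩, fun j => ?_⟩
      simpa [Fin.cons_succ] using h2 j
  -- the rectangles belong to 𝒬_{m+1}(F³)
  have hcube : ∀ i ≤ 5^m+1, rect3 m i (cube 2 (m+1) l) ∈ QcolOf 3 (m+1) (Fset 3) := by
    intro i hi
    have hiR : (i:ℝ) ≤ 5^m + 1 := by exact_mod_cast hi
    rw [hrect i]
    have hbound : ∀ j : Fin 3, 1 ≤ (Fin.cons (5^m+i) l : Fin 3 → ℕ) j ∧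
        (Fin.cons (5^m+i) l : Fin 3 → ℕ) j ≤ 5^(m+1) := by
      intro j
      refine Fin.cases ?_ (fun j' => ?_) j
      · simp only [Fin.cons_zero]
        have h2 : 5^(m+1) = 5^m*5 := pow_succ 5 m
        have h3 : 1 ≤ 5^m := Nat.one_le_pow m 5 (by norm_num)
        omega
      · simpa [Fin.cons_succ] using hlb j'
    refine ⟨⟨Fin.cons (5^m+i) l, hbound, rfl⟩, ?_⟩
    set tm : ℝ := ((5:ℝ)^m - 1 + i + 1/2)/5^(m+1) with htm
    have htm0 : 0 ≤ tm := div_nonneg (by linarith) h5.le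
    have htm1 : tm ≤ 1 := by
      rw [htm, div_le_one h5, hps]; linarith
    refine ⟨WithLp.toLp 2 (Fin.cons tm p.ofLp), ?_, aux_cons_mem_Fset ⟨htm0, htm1⟩ hpG⟩
    rw [aux_mem_interior_cube]
    intro j
    refine Fin.cases ?_ (fun j' => ?_) j
    · have e1 : (((5^m+i:ℕ)):ℝ) = 5^m + i := by push_cast; ring
      simp only [PiLp.toLp_apply, Fin.cons_zero, e1]
      constructor
      · exact (div_lt_div_iff_of_pos_right h5).mpr (by linarith)
      · exact (div_lt_div_iff_of_pos_right h5).mpr (by linarith)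
    · simpa [Fin.cons_succ] using hpi j'
  refine ⟨hcube, ?_, ?_⟩
  · -- the first rectangle lies in Sᵐ({Q₁})
    refine ⟨by rw [Nat.add_comm 1 m]; exact hcube 0 (Nat.zero_le _), Qone 3,
      Set.mem_singleton _, ?_⟩
    intro x hx
    intro j
    refine Fin.cases ?_ (fun j' => ?_) j
    · have h1 := hx.1.1
      have h2 := hx.1.2
      have e0 : ((0:ℕ):ℝ) = 0 := by norm_num
      rw [e0] at h1 h2
      constructor
      · have : (0:ℝ) ≤ ((5:ℝ)^m - 1 + 0)/5^(m+1) := div_nonneg (by linarith) h5.le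
        linarith
      · have : ((5:ℝ)^m + 0)/5^(m+1) = 1/5 := by rw [add_zero]; exact hfifth
        linarith
    · have h1 := (hx.2 j').1
      have h2 := (hx.2 j').2
      constructor
      · have : (0:ℝ) ≤ ((l j':ℝ) - 1)/5^(m+1) := div_nonneg (by linarith [hl1R j']) h5.le
        linarith
      · have h3 : (l j':ℝ)/5^(m+1) ≤ 5^m/5^(m+1) :=
          (div_le_div_iff_of_pos_right h5).mpr (hl5mR j')
        rw [hfifth] at h3
        linarith
  · -- the last rectangle lies in Sᵐ(Γ(Q₁)ᶜ)
    have hL1b : ∀ j : Fin 3, 1 ≤ (Fin.cons 3 (fun _ => 1) : Fin 3 → ℕ) j ∧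
        (Fin.cons 3 (fun _ => 1) : Fin 3 → ℕ) j ≤ 5^1 := by
      intro j
      refine Fin.cases ?_ (fun j' => ?_) j <;> simp [Fin.cons_succ]
    have hL0 : ((Fin.cons 3 (fun _ => 1) : Fin 3 → ℕ) 0 : ℝ) = 3 := by
      simp
    have hLs : ∀ j' : Fin 2, ((Fin.cons 3 (fun _ => 1) : Fin 3 → ℕ) j'.succ : ℝ) = 1 := by
      intro j'; simp [Fin.cons_succ]
    have hQ'col : cube 3 1 (Fin.cons 3 (fun _ => 1)) ∈ QcolOf 3 1 (Fset 3) := by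
      refine ⟨⟨Fin.cons 3 (fun _ => 1), hL1b, rfl⟩, ?_⟩
      refine ⟨WithLp.toLp 2 (Fin.cons (1/2 : ℝ) p.ofLp), ?_, aux_cons_mem_Fset ⟨by norm_num, by norm_num⟩ hpG⟩
      rw [aux_mem_interior_cube]
      intro j
      refine Fin.cases ?_ (fun j' => ?_) j
      · simp only [PiLp.toLp_apply, Fin.cons_zero]
        push_cast
        norm_num
      · simp only [PiLp.toLp_apply, Fin.cons_succ]
        push_cast
        norm_num
        exact ⟨hp0 j', hp15 j'⟩
    have hdisj : ¬ (cube 3 1 (Fin.cons 3 (fun _ => 1)) ∩ Qone 3).Nonempty := by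
      rintro ⟨z, hz1, hz2⟩
      have h1 := (hz1 0).1
      simp only [Fin.cons_zero] at h1
      push_cast at h1
      norm_num at h1
      have h2 := (hz2 0).2
      linarith
    have hsub3 : rect3 m (5^m+1) (cube 2 (m+1) l) ⊆ cube 3 1 (Fin.cons 3 (fun _ => 1)) := by
      intro x hx j
      refine Fin.cases ?_ (fun j' => ?_) j
      · have e : ((5^m+1:ℕ):ℝ) = 5^m+1 := by push_cast; ring
        have h1 := hx.1.1
        have h2 := hx.1.2
        rw [e] at h1 h2
        simp only [Fin.cons_zero]
        push_cast
        constructor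
        · have : ((3:ℝ)-1)/5^1 = ((5:ℝ)^m - 1 + (5^m+1))/5^(m+1) := by
            rw [div_eq_div_iff (by norm_num : ((5:ℝ)^1) ≠ 0) h5.ne', hps]
            ring
          rw [this]
          exact h1
        · have h3 : ((5:ℝ)^m + (5^m+1))/5^(m+1) ≤ (3:ℝ)/5^1 := by
            rw [div_le_div_iff₀ h5 (by norm_num : (0:ℝ) < 5^1), hps]
            nlinarith [h5m]
          linarith
      · have h1 := (hx.2 j').1
        have h2 := (hx.2 j').2
        simp only [Fin.cons_succ]
        push_cast
        constructor
        · have : (0:ℝ) ≤ ((l j':ℝ) - 1)/5^(m+1) := div_nonneg (by linarith [hl1R j']) h5.le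
          norm_num
          linarith
        · have h3 : (l j':ℝ)/5^(m+1) ≤ 5^m/5^(m+1) :=
            (div_le_div_iff_of_pos_right h5).mpr (hl5mR j')
          rw [hfifth] at h3
          norm_num
          linarith
    exact ⟨by rw [Nat.add_comm 1 m]; exact hcube (5^m+1) le_rfl,
      cube 3 1 (Fin.cons 3 (fun _ => 1)), ⟨hQ'col, fun hg => hdisj hg.2⟩, hsub3⟩
end
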